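/- Let P be a (not necessarily finite) patchwork on a set Ω. Then there exists a linear order on Ω under which every member of P is convex if and only if no three nonempty members of P are pairwise adjacent. -/

import Mathlib

/-- A subset `A` is convex with respect to an order relation `le` if whenever
`p ≤ q ≤ r` with `p ∈ A` and `r ∈ A`, also `q ∈ A`. -/
def IsConvex {Ω : Type*} (le : Ω → Ω → Prop) (A : Set Ω) : Prop :=
  ∀ p q r : Ω, le p q → le q r → p ∈ A → r ∈ A → q ∈ A

/-- Two subsets overlap if they have nonempty intersection and neither contains the other. -/
def Overlap {Ω : Type*} (A B : Set Ω) : Prop :=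
  (A ∩ B).Nonempty ∧ ¬ A ⊆ B ∧ ¬ B ⊆ A

/-- A patchwork on `Ω` is a set of subsets of `Ω` containing `∅` and `Ω` and closed under
intersection, union and difference of overlapping pairs. -/
def IsPatchwork {Ω : Type*} (P : Set (Set Ω)) : Prop :=
  ∅ ∈ P ∧ Set.univ ∈ P ∧
    ∀ A ∈ P, ∀ B ∈ P, Overlap A B → A ∩ B ∈ P ∧ A ∪ B ∈ P ∧ A \ B ∈ P

/-- A member of a patchwork is autonomous if it is nonempty and overlaps no member. -/
def Autonomous {Ω : Type*} (P : Set (Set Ω)) (A : Set Ω) : Prop :=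
  A ∈ P ∧ A.Nonempty ∧ ∀ B ∈ P, ¬ Overlap A B

/-- The cohort under `B`: the maximal autonomous proper subsets of `B`. -/
def Cohort {Ω : Type*} (P : Set (Set Ω)) (B : Set Ω) : Set (Set Ω) :=
  {A | Autonomous P A ∧ A ⊂ B ∧ ∀ C, Autonomous P C → C ⊂ B → A ⊆ C → A = C}

/-- Two members of a patchwork are adjacent if they are disjoint and their union is a member. -/
def Adjacent {Ω : Type*} (P : Set (Set Ω)) (A B : Set Ω) : Prop :=
  Disjoint A B ∧ A ∪ B ∈ P

/-- The smallest patchwork on `Ω` containing `C`. -/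
def patchworkClosure {Ω : Type*} (C : Set (Set Ω)) : Set (Set Ω) :=
  ⋂₀ {P | IsPatchwork P ∧ C ⊆ P}

/-- No three nonempty members of `P` are pairwise adjacent. -/
def NoThreePairwiseAdjacent {Ω : Type*} (P : Set (Set Ω)) : Prop :=
  ¬ ∃ A B C : Set Ω, A ∈ P ∧ B ∈ P ∧ C ∈ P ∧
    A.Nonempty ∧ B.Nonempty ∧ C.Nonempty ∧ A ≠ B ∧ A ≠ C ∧ B ≠ C ∧
    Adjacent P A B ∧ Adjacent P A C ∧ Adjacent P B C


open Classical Set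

namespace Patch

variable {Ω : Type*} {P : Set (Set Ω)}

theorem overlap_symm {A B : Set Ω} (h : Overlap A B) : Overlap B A :=
  ⟨by rw [Set.inter_comm]; exact h.1, h.2.2, h.2.1⟩

theorem pw_inter (hP : IsPatchwork P) {A B : Set Ω} (hA : A ∈ P) (hB : B ∈ P)
    (h : Overlap A B) : A ∩ B ∈ P := (hP.2.2 A hA B hB h).1

theorem pw_union (hP : IsPatchwork P) {A B : Set Ω} (hA : A ∈ P) (hB : B ∈ P)
    (h : Overlap A B) : A ∪ B ∈ P := (hP.2.2 A hA B hB h).2.1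

theorem pw_diff (hP : IsPatchwork P) {A B : Set Ω} (hA : A ∈ P) (hB : B ∈ P)
    (h : Overlap A B) : A \ B ∈ P := (hP.2.2 A hA B hB h).2.2

/-- A triple of nonempty pairwise disjoint sets with all pairwise unions in `P`
contradicts `NoThreePairwiseAdjacent`. -/
theorem mk_triangle (hN : NoThreePairwiseAdjacent P) {X Y Z : Set Ω}
    (hX : X ∈ P) (hY : Y ∈ P) (hZ : Z ∈ P)
    (hXn : X.Nonempty) (hYn : Y.Nonempty) (hZn : Z.Nonempty)
    (dXY : X ∩ Y = ∅) (dXZ : X ∩ Z = ∅) (dYZ : Y ∩ Z = ∅)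
    (uXY : X ∪ Y ∈ P) (uXZ : X ∪ Z ∈ P) (uYZ : Y ∪ Z ∈ P) : False := by
  have dXY' : Disjoint X Y := Set.disjoint_iff_inter_eq_empty.2 dXY
  have dXZ' : Disjoint X Z := Set.disjoint_iff_inter_eq_empty.2 dXZ
  have dYZ' : Disjoint Y Z := Set.disjoint_iff_inter_eq_empty.2 dYZ
  have neXY : X ≠ Y := by
    rintro rfl; obtain ⟨x, hx⟩ := hXn
    rw [Set.inter_self] at dXY; rw [dXY] at hx; exact hx
  have neXZ : X ≠ Z := by
    rintro rfl; obtain ⟨x, hx⟩ := hXn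
    rw [Set.inter_self] at dXZ; rw [dXZ] at hx; exact hx
  have neYZ : Y ≠ Z := by
    rintro rfl; obtain ⟨x, hx⟩ := hYn
    rw [Set.inter_self] at dYZ; rw [dYZ] at hx; exact hx
  exact hN ⟨X, Y, Z, hX, hY, hZ, hXn, hYn, hZn, neXY, neXZ, neYZ,
    ⟨dXY', uXY⟩, ⟨dXZ', uXZ⟩, ⟨dYZ', uYZ⟩⟩

/-- The key "three mutually crossing members" lemma: if `D₁, D₂, D₃ ∈ P` and points
`a ∈ D₁ ∩ D₂ \ D₃`, `b ∈ D₁ ∩ D₃ \ D₂`, `c ∈ D₂ ∩ D₃ \ D₁` exist, then `P` has three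
pairwise adjacent nonempty members. -/
theorem three_crossing (hP : IsPatchwork P) (hN : NoThreePairwiseAdjacent P)
    {D₁ D₂ D₃ : Set Ω} (h1 : D₁ ∈ P) (h2 : D₂ ∈ P) (h3 : D₃ ∈ P)
    {a b c : Ω}
    (ha1 : a ∈ D₁) (ha2 : a ∈ D₂) (ha3 : a ∉ D₃)
    (hb1 : b ∈ D₁) (hb3 : b ∈ D₃) (hb2 : b ∉ D₂)
    (hc2 : c ∈ D₂) (hc3 : c ∈ D₃) (hc1 : c ∉ D₁) : False := by
  -- U = D₁ ∪ D₃
  have o13 : Overlap D₁ D₃ := ⟨⟨b, hb1, hb3⟩, fun h => ha3 (h ha1), fun h => hc1 (h hc3)⟩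
  have hU : D₁ ∪ D₃ ∈ P := pw_union hP h1 h3 o13
  have hEB : D₁ ∩ D₃ ∈ P := pw_inter hP h1 h3 o13
  set U := D₁ ∪ D₃ with hUdef
  set EB := D₁ ∩ D₃ with hEBdef
  -- H = D₂ ∩ U
  have hH : D₂ ∩ U ∈ P := by
    by_cases hsub : D₂ ⊆ U
    · rwa [Set.inter_eq_left.2 hsub]
    · exact pw_inter hP h2 hU ⟨⟨a, ha2, Or.inl ha1⟩, hsub, fun h => hb2 (h (Or.inl hb1))⟩
  set H := D₂ ∩ U with hHdef
  have haH : a ∈ H := ⟨ha2, Or.inl ha1⟩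
  have hcH : c ∈ H := ⟨hc2, Or.inr hc3⟩
  have hbH : b ∉ H := fun h => hb2 h.1
  -- V = H \ EB
  have hV : H \ EB ∈ P := by
    by_cases hemp : (H ∩ EB) = ∅
    · have : H \ EB = H := by
        ext x; constructor
        · exact fun h => h.1
        · intro hx; exact ⟨hx, fun hx2 => (Set.eq_empty_iff_forall_notMem.1 hemp x) ⟨hx, hx2⟩⟩
      rwa [this]
    · have hne : (H ∩ EB).Nonempty := Set.nonempty_iff_ne_empty.2 hemp
      exact pw_diff hP hH hEB ⟨hne, fun h => ha3 (h haH).2, fun h => hbH (h ⟨hb1, hb3⟩)⟩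
  set V := H \ EB with hVdef
  have haV : a ∈ V := ⟨haH, fun h => ha3 h.2⟩
  have hcV : c ∈ V := ⟨hcH, fun h => hc1 h.1⟩
  have hbV : b ∉ V := fun h => hbH h.1
  have hVU : V ⊆ U := fun x hx => hx.1.2
  have hVEB : V ∩ EB = ∅ := by
    ext x; simp only [Set.mem_inter_iff, Set.mem_empty_iff_false, iff_false]
    rintro ⟨hv, he⟩; exact hv.2 he
  -- N_A = V ∩ D₁, N_C = V \ D₁
  have oV1 : Overlap V D₁ := ⟨⟨a, haV, ha1⟩, fun h => hc1 (h hcV), fun h => hbV (h hb1)⟩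
  have hNA : V ∩ D₁ ∈ P := pw_inter hP hV h1 oV1
  have hNC : V \ D₁ ∈ P := pw_diff hP hV h1 oV1
  have hVD1 : V ∪ D₁ ∈ P := pw_union hP hV h1 oV1
  have oV3 : Overlap V D₃ := ⟨⟨c, hcV, hc3⟩, fun h => ha3 (h haV), fun h => hbV (h hb3)⟩
  have hVD3 : V ∪ D₃ ∈ P := pw_union hP hV h3 oV3
  set NA := V ∩ D₁ with hNAdef
  set NC := V \ D₁ with hNCdef
  -- N_A ∪ EB = D₁ ∩ (V ∪ D₃)
  have idAB : NA ∪ EB = D₁ ∩ (V ∪ D₃) := by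
    ext x; constructor
    · rintro (⟨hv, h1'⟩ | ⟨h1', h3'⟩)
      · exact ⟨h1', Or.inl hv⟩
      · exact ⟨h1', Or.inr h3'⟩
    · rintro ⟨h1', (hv | h3')⟩
      · exact Or.inl ⟨hv, h1'⟩
      · exact Or.inr ⟨h1', h3'⟩
  have hUAB : NA ∪ EB ∈ P := by
    rw [idAB]
    by_cases hsub : D₁ ⊆ V ∪ D₃
    · rwa [Set.inter_eq_left.2 hsub]
    · exact pw_inter hP h1 hVD3 ⟨⟨a, ha1, Or.inl haV⟩, hsub, fun h => hc1 (h (Or.inl hcV))⟩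
  -- EB ∪ N_C = D₃ ∩ (V ∪ D₁)
  have idBC : EB ∪ NC = D₃ ∩ (V ∪ D₁) := by
    ext x; constructor
    · rintro (⟨h1', h3'⟩ | ⟨hv, h1'⟩)
      · exact ⟨h3', Or.inr h1'⟩
      · have hx3 : x ∈ D₃ := by
          rcases hVU hv with h | h
          · exact absurd h h1'
          · exact h
        exact ⟨hx3, Or.inl hv⟩
    · rintro ⟨h3', (hv | h1')⟩
      · right; refine ⟨hv, fun h1' => ?_⟩
        have : x ∈ V ∩ EB := ⟨hv, h1', h3'⟩
        rw [hVEB] at this; exact this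
      · exact Or.inl ⟨h1', h3'⟩
  have hUBC : EB ∪ NC ∈ P := by
    rw [idBC]
    by_cases hsub : D₃ ⊆ V ∪ D₁
    · rwa [Set.inter_eq_left.2 hsub]
    · exact pw_inter hP h3 hVD1 ⟨⟨c, hc3, Or.inl hcV⟩, hsub, fun h => ha3 (h (Or.inl haV))⟩
  -- Triangle
  refine mk_triangle hN hNA hEB hNC ⟨a, haV, ha1⟩ ⟨b, hb1, hb3⟩ ⟨c, hcV, hc1⟩ ?_ ?_ ?_ hUAB
    (by rw [Set.inter_union_diff]; exact hV) hUBC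
  · ext x; simp only [Set.mem_inter_iff, Set.mem_empty_iff_false, iff_false]
    rintro ⟨⟨hv, _⟩, he⟩
    exact (Set.eq_empty_iff_forall_notMem.1 hVEB x) ⟨hv, he⟩
  · ext x; simp only [Set.mem_inter_iff, Set.mem_empty_iff_false, iff_false]
    rintro ⟨⟨_, h1'⟩, ⟨_, hn1⟩⟩; exact hn1 h1'
  · ext x; simp only [Set.mem_inter_iff, Set.mem_empty_iff_false, iff_false]
    rintro ⟨he, ⟨hv, _⟩⟩
    exact (Set.eq_empty_iff_forall_notMem.1 hVEB x) ⟨hv, he⟩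

end Patch

namespace Patch

variable {Ω : Type*} {P : Set (Set Ω)}

/-- The trace of `P` on a subset `S`, as a family on the subtype. -/
def trace (P : Set (Set Ω)) (S : Set Ω) : Set (Set ↥S) :=
  {A' | ∃ B ∈ P, A' = (Subtype.val ⁻¹' B : Set ↥S)}

theorem trace_patchwork (hP : IsPatchwork P) (S : Set Ω) : IsPatchwork (trace P S) := by
  refine ⟨⟨∅, hP.1, by ext x; simp⟩, ⟨Set.univ, hP.2.1, by ext x; simp⟩, ?_⟩
  rintro A' ⟨A, hA, rfl⟩ B' ⟨B, hB, rfl⟩ hov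
  obtain ⟨⟨x, hx1, hx2⟩, hns1, hns2⟩ := hov
  have hAB : Overlap A B := by
    refine ⟨⟨x, hx1, hx2⟩, fun h => hns1 ?_, fun h => hns2 ?_⟩
    · intro y hy; exact h hy
    · intro y hy; exact h hy
  refine ⟨⟨A ∩ B, pw_inter hP hA hB hAB, by ext y; simp⟩,
    ⟨A ∪ B, pw_union hP hA hB hAB, by ext y; simp⟩,
    ⟨A \ B, pw_diff hP hA hB hAB, by ext y; simp⟩⟩

theorem trace_noThree (hP : IsPatchwork P) (hN : NoThreePairwiseAdjacent P) (S : Set Ω) :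
    NoThreePairwiseAdjacent (trace P S) := by
  rintro ⟨A', B', C', hA', hB', hC', hAn, hBn, hCn, _, _, _,
    ⟨dAB, ⟨D1, hD1, hD1e⟩⟩, ⟨dAC, ⟨D2, hD2, hD2e⟩⟩, ⟨dBC, ⟨D3, hD3, hD3e⟩⟩⟩
  obtain ⟨a, haA⟩ := hAn
  obtain ⟨b, hbB⟩ := hBn
  obtain ⟨c, hcC⟩ := hCn
  have hab : a ∉ B' := fun h => (Set.disjoint_iff.1 dAB) ⟨haA, h⟩
  have hac : a ∉ C' := fun h => (Set.disjoint_iff.1 dAC) ⟨haA, h⟩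
  have hba : b ∉ A' := fun h => (Set.disjoint_iff.1 dAB) ⟨h, hbB⟩
  have hbc : b ∉ C' := fun h => (Set.disjoint_iff.1 dBC) ⟨hbB, h⟩
  have hca : c ∉ A' := fun h => (Set.disjoint_iff.1 dAC) ⟨h, hcC⟩
  have hcb : c ∉ B' := fun h => (Set.disjoint_iff.1 dBC) ⟨h, hcC⟩
  have m1 : ∀ x : ↥S, (↑x ∈ D1) ↔ (x ∈ A' ∪ B') := by
    intro x; rw [hD1e]; exact Iff.rfl
  have m2 : ∀ x : ↥S, (↑x ∈ D2) ↔ (x ∈ A' ∪ C') := by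
    intro x; rw [hD2e]; exact Iff.rfl
  have m3 : ∀ x : ↥S, (↑x ∈ D3) ↔ (x ∈ B' ∪ C') := by
    intro x; rw [hD3e]; exact Iff.rfl
  exact three_crossing hP hN hD1 hD2 hD3
    ((m1 a).2 (Or.inl haA)) ((m2 a).2 (Or.inl haA))
      (fun h => by rcases (m3 a).1 h with h' | h' <;> [exact hab h'; exact hac h'])
    ((m1 b).2 (Or.inr hbB)) ((m3 b).2 (Or.inl hbB))
      (fun h => by rcases (m2 b).1 h with h' | h' <;> [exact hba h'; exact hbc h'])
    ((m2 c).2 (Or.inr hcC)) ((m3 c).2 (Or.inr hcC))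
      (fun h => by rcases (m1 c).1 h with h' | h' <;> [exact hca h'; exact hcb h'])

/-- Easy direction: a compatible linear order forbids three pairwise adjacent members. -/
theorem easy_direction {L : LinearOrder Ω} (hconv : ∀ A ∈ P, IsConvex L.le A) :
    NoThreePairwiseAdjacent P := by
  rintro ⟨A, B, C, hA, hB, hC, ⟨a, ha⟩, ⟨b, hb⟩, ⟨c, hc⟩, _, _, _,
    ⟨dAB, uAB⟩, ⟨dAC, uAC⟩, ⟨dBC, uBC⟩⟩
  -- helper : if x between y and z with y ∈ Y, z ∈ Z, union Y Z ∈ P, x ∉ Y, x ∉ Z → False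
  have key : ∀ (x y z : Ω) (Y Z : Set Ω), Y ∪ Z ∈ P → L.le y x → L.le x z →
      y ∈ Y → z ∈ Z → x ∉ Y → x ∉ Z → False := by
    intro x y z Y Z hU hyx hxz hy hz hxY hxZ
    have := hconv _ hU y x z hyx hxz (Or.inl hy) (Or.inr hz)
    rcases this with h | h
    · exact hxY h
    · exact hxZ h
  have hab' : a ∉ B := fun h => (Set.disjoint_iff.1 dAB) ⟨ha, h⟩
  have hac' : a ∉ C := fun h => (Set.disjoint_iff.1 dAC) ⟨ha, h⟩
  have hba' : b ∉ A := fun h => (Set.disjoint_iff.1 dAB) ⟨h, hb⟩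
  have hbc' : b ∉ C := fun h => (Set.disjoint_iff.1 dBC) ⟨hb, h⟩
  have hca' : c ∉ A := fun h => (Set.disjoint_iff.1 dAC) ⟨h, hc⟩
  have hcb' : c ∉ B := fun h => (Set.disjoint_iff.1 dBC) ⟨h, hc⟩
  rcases L.le_total a b with h1 | h1
  · rcases L.le_total b c with h2 | h2
    · exact key b a c A C uAC h1 h2 ha hc hba' hbc'
    · rcases L.le_total a c with h3 | h3
      · exact key c a b A B uAB h3 h2 ha hb hca' hcb'
      · exact key a c b C B (by rwa [Set.union_comm]) h3 h1 hc hb hac' hab'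
  · rcases L.le_total a c with h2 | h2
    · exact key a b c B C uBC h1 h2 hb hc hab' hac'
    · rcases L.le_total b c with h3 | h3
      · exact key c b a B A (by rwa [Set.union_comm]) h3 h2 hb ha hcb' hca'
      · exact key b c a C A (by rwa [Set.union_comm]) h3 h1 hc ha hbc' hba'

end Patch

namespace Patch

variable {Ω : Type*} {P : Set (Set Ω)}

/-- Graph adjacency induced by the two-element members of `P`. -/
def Adjv (P : Set (Set Ω)) (a b : Ω) : Prop := a ≠ b ∧ ({a, b} : Set Ω) ∈ P

/-- One step of the graph inside a subset `T`. -/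
def stepIn (P : Set (Set Ω)) (T : Set Ω) (a b : Ω) : Prop :=
  a ∈ T ∧ b ∈ T ∧ Adjv P a b

/-- Connectivity of a subset `T` via edges inside `T`. -/
def ConnIn (P : Set (Set Ω)) (T : Set Ω) : Prop :=
  ∀ a ∈ T, ∀ b ∈ T, Relation.ReflTransGen (stepIn P T) a b

/-- Every autonomous member is the whole set or a singleton. -/
def Crisp (P : Set (Set Ω)) : Prop :=
  ∀ A, Autonomous P A → A = Set.univ ∨ ∃ x, A = {x}

theorem Adjv.symm' {a b : Ω} (h : Adjv P a b) : Adjv P b a :=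
  ⟨h.1.symm, by rw [Set.pair_comm b a]; exact h.2⟩

theorem stepIn_symm {T : Set Ω} : Symmetric (stepIn P T) :=
  fun _ _ h => ⟨h.2.1, h.1, h.2.2.symm'⟩

theorem rtg_symm {T : Set Ω} {a b : Ω} (h : Relation.ReflTransGen (stepIn P T) a b) :
    Relation.ReflTransGen (stepIn P T) b a :=
  by
    induction h with
    | refl => exact Relation.ReflTransGen.refl
    | tail _ hs ih => exact Relation.ReflTransGen.head (stepIn_symm hs) ih

theorem rtg_mono {T T' : Set Ω} (hTT : T ⊆ T') {a b : Ω}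
    (h : Relation.ReflTransGen (stepIn P T) a b) :
    Relation.ReflTransGen (stepIn P T') a b :=
  Relation.ReflTransGen.mono (r := stepIn P T) (p := stepIn P T')
    (fun _ _ hs => ⟨hTT hs.1, hTT hs.2.1, hs.2.2⟩) _ _ h

/-- Exit lemma: a walk in `T` from inside `M` to outside `M` crosses an edge. -/
theorem exit_lemma {T M : Set Ω} {a b : Ω} (h : Relation.ReflTransGen (stepIn P T) a b)
    (ha : a ∈ M) (hb : b ∉ M) :
    ∃ p q, p ∈ M ∧ q ∉ M ∧ p ∈ T ∧ q ∈ T ∧ Adjv P p q := by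
  induction h using Relation.ReflTransGen.head_induction_on with
  | refl => exact absurd ha hb
  | head hs _ ih =>
    rename_i x c _
    by_cases hc : c ∈ M
    · exact ih hc
    · exact ⟨x, c, ha, hc, hs.1, hs.2.1, hs.2.2⟩

/-- Degree at most two: no vertex has three distinct neighbours. -/
theorem deg_le_two (hP : IsPatchwork P) (hN : NoThreePairwiseAdjacent P)
    {x b c d : Ω} (hb : Adjv P x b) (hc : Adjv P x c) (hd : Adjv P x d)
    (hbc : b ≠ c) (hbd : b ≠ d) (hcd : c ≠ d) : False := by
  have hxb := hb.2; have hxc := hc.2; have hxd := hd.2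
  have obc : Overlap ({x, b} : Set Ω) {x, c} := by
    refine ⟨⟨x, by simp, by simp⟩, fun h => ?_, fun h => ?_⟩
    · have := h (by simp : b ∈ ({x, b} : Set Ω))
      simp only [Set.mem_insert_iff, Set.mem_singleton_iff] at this
      rcases this with h' | h' <;> [exact hb.1 h'.symm; exact hbc h']
    · have := h (by simp : c ∈ ({x, c} : Set Ω))
      simp only [Set.mem_insert_iff, Set.mem_singleton_iff] at this
      rcases this with h' | h' <;> [exact hc.1 h'.symm; exact hbc h'.symm]
  have hxset : ({x} : Set Ω) ∈ P := by
    have := pw_inter hP hxb hxc obc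
    have e : ({x, b} : Set Ω) ∩ {x, c} = {x} := by
      ext y; simp only [Set.mem_inter_iff, Set.mem_insert_iff, Set.mem_singleton_iff]
      constructor
      · rintro ⟨h1 | h1, h2 | h2⟩
        · exact h1
        · exact h1
        · exact h2
        · exact absurd (h1.symm.trans h2) hbc
      · rintro rfl; exact ⟨Or.inl rfl, Or.inl rfl⟩
    rwa [e] at this
  have hbset : ({b} : Set Ω) ∈ P := by
    have := pw_diff hP hxb hxc obc
    have e : ({x, b} : Set Ω) \ {x, c} = {b} := by
      ext y; simp only [Set.mem_diff, Set.mem_insert_iff, Set.mem_singleton_iff]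
      constructor
      · rintro ⟨h1 | h1, h2⟩
        · exact absurd (Or.inl h1) h2
        · exact h1
      · rintro rfl; exact ⟨Or.inr rfl, by rintro (h | h) <;> [exact hb.1 h.symm; exact hbc h]⟩
    rwa [e] at this
  have hcset : ({c} : Set Ω) ∈ P := by
    have := pw_diff hP hxc hxb (overlap_symm obc)
    have e : ({x, c} : Set Ω) \ {x, b} = {c} := by
      ext y; simp only [Set.mem_diff, Set.mem_insert_iff, Set.mem_singleton_iff]
      constructor
      · rintro ⟨h1 | h1, h2⟩
        · exact absurd (Or.inl h1) h2
        · exact h1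
      · rintro rfl; exact ⟨Or.inr rfl, by rintro (h | h) <;> [exact hc.1 h.symm; exact hbc h.symm]⟩
    rwa [e] at this
  have hxbc : ({x, b} : Set Ω) ∪ {x, c} ∈ P := pw_union hP hxb hxc obc
  have e3 : ({x, b} : Set Ω) ∪ {x, c} = {x, b, c} := by
    ext y; simp only [Set.mem_union, Set.mem_insert_iff, Set.mem_singleton_iff]; tauto
  rw [e3] at hxbc
  have obcd : Overlap ({x, b, c} : Set Ω) {x, d} := by
    refine ⟨⟨x, by simp, by simp⟩, fun h => ?_, fun h => ?_⟩
    · have := h (by simp : b ∈ ({x, b, c} : Set Ω))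
      simp only [Set.mem_insert_iff, Set.mem_singleton_iff] at this
      rcases this with h' | h' <;> [exact hb.1 h'.symm; exact hbd h']
    · have := h (by simp : d ∈ ({x, d} : Set Ω))
      simp only [Set.mem_insert_iff, Set.mem_singleton_iff] at this
      rcases this with h' | h' | h' <;>
        [exact hd.1 h'.symm; exact hbd h'.symm; exact hcd h'.symm]
  have hbcset : ({b, c} : Set Ω) ∈ P := by
    have := pw_diff hP hxbc hxd obcd
    have e : ({x, b, c} : Set Ω) \ {x, d} = {b, c} := by
      ext y; simp only [Set.mem_diff, Set.mem_insert_iff, Set.mem_singleton_iff]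
      constructor
      · rintro ⟨h1 | h1 | h1, h2⟩
        · exact absurd (Or.inl h1) h2
        · exact Or.inl h1
        · exact Or.inr h1
      · rintro (rfl | rfl)
        · exact ⟨Or.inr (Or.inl rfl), by rintro (h | h) <;> [exact hb.1 h.symm; exact hbd h]⟩
        · exact ⟨Or.inr (Or.inr rfl), by rintro (h | h) <;> [exact hc.1 h.symm; exact hcd h]⟩
    rwa [e] at this
  refine mk_triangle hN hxset hbset hcset ⟨x, rfl⟩ ⟨b, rfl⟩ ⟨c, rfl⟩ ?_ ?_ ?_ ?_ ?_ ?_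
  · ext y; simp only [Set.mem_inter_iff, Set.mem_singleton_iff, Set.mem_empty_iff_false, iff_false]
    rintro ⟨rfl, h⟩; exact hb.1 h
  · ext y; simp only [Set.mem_inter_iff, Set.mem_singleton_iff, Set.mem_empty_iff_false, iff_false]
    rintro ⟨rfl, h⟩; exact hc.1 h
  · ext y; simp only [Set.mem_inter_iff, Set.mem_singleton_iff, Set.mem_empty_iff_false, iff_false]
    rintro ⟨rfl, h⟩; exact hbc h
  · have e : ({x} : Set Ω) ∪ {b} = {x, b} := by ext y; simp; tauto
    rwa [e]
  · have e : ({x} : Set Ω) ∪ {c} = {x, c} := by ext y; simp; tauto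
    rwa [e]
  · have e : ({b} : Set Ω) ∪ {c} = {b, c} := by ext y; simp; tauto
    rwa [e]

/-- Absorbing a neighbour into a member. -/
theorem absorb (hP : IsPatchwork P) {M : Set Ω} (hM : M ∈ P) {p q : Ω}
    (hp : p ∈ M) (hpq : Adjv P p q) (hq : q ∉ M) : M ∪ {q} ∈ P := by
  by_cases hsing : ∃ m, m ∈ M ∧ m ≠ p
  · obtain ⟨m, hm, hmp⟩ := hsing
    have o : Overlap M ({p, q} : Set Ω) := by
      refine ⟨⟨p, hp, by simp⟩, fun h => ?_, fun h => ?_⟩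
      · have := h hm
        simp only [Set.mem_insert_iff, Set.mem_singleton_iff] at this
        rcases this with h' | h'
        · exact hmp h'
        · rw [h'] at hm; exact hq hm
      · exact hq (h (by simp : q ∈ ({p, q} : Set Ω)))
    have := pw_union hP hM hpq.2 o
    have e : M ∪ ({p, q} : Set Ω) = M ∪ {q} := by
      ext y; simp only [Set.mem_union, Set.mem_insert_iff, Set.mem_singleton_iff]
      constructor
      · rintro (h | rfl | rfl) <;> [exact Or.inl h; exact Or.inl hp; exact Or.inr rfl]
      · rintro (h | rfl) <;> [exact Or.inl h; exact Or.inr (Or.inr rfl)]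
    rwa [e] at this
  · push_neg at hsing
    have hMp : M = {p} := by
      ext y; simp only [Set.mem_singleton_iff]
      exact ⟨fun h => hsing y h, fun h => h ▸ hp⟩
    have e : M ∪ {q} = ({p, q} : Set Ω) := by
      rw [hMp]; ext y; simp [Set.mem_insert_iff]; tauto
    rw [e]; exact hpq.2

/-- A connected subset with at least two elements is a member. -/
theorem conn_mem [Finite Ω] (hP : IsPatchwork P) {T : Set Ω} (hconn : ConnIn P T)
    (h2 : ∃ x ∈ T, ∃ y ∈ T, x ≠ y) : T ∈ P := by
  obtain ⟨x, hx, y, hy, hxy⟩ := h2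
  obtain ⟨z, hz⟩ := (hconn x hx y hy).cases_head.resolve_left hxy
  have hz' : z ∈ T := hz.1.2.1
  have hedge : ({x, z} : Set Ω) ∈ P := hz.1.2.2.2
  -- collection of members contained in T containing x
  set 𝒞 : Set (Set Ω) := {A | A ∈ P ∧ A ⊆ T ∧ x ∈ A} with h𝒞
  have hC0 : ({x, z} : Set Ω) ∈ 𝒞 := by
    refine ⟨hedge, ?_, by simp⟩
    intro w hw
    simp only [Set.mem_insert_iff, Set.mem_singleton_iff] at hw
    rcases hw with rfl | rfl <;> [exact hx; exact hz']
  obtain ⟨M, hM𝒞, hMmax⟩ : ∃ a ∈ 𝒞, ∀ a' ∈ 𝒞, Set.ncard a ≤ Set.ncard a' →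
      Set.ncard a = Set.ncard a' := by
    obtain ⟨a, ha, hm⟩ := Set.Finite.exists_maximalFor Set.ncard 𝒞 (Set.toFinite 𝒞) ⟨_, hC0⟩
    exact ⟨a, ha, fun b hb hab => le_antisymm hab (hm hb hab)⟩
  obtain ⟨hM, hMT, hxM⟩ := hM𝒞
  by_cases hMeq : M = T
  · rwa [hMeq] at hM
  · obtain ⟨t, htT, htM⟩ : ∃ t, t ∈ T ∧ t ∉ M := by
      by_contra h
      push_neg at h
      exact hMeq (Set.Subset.antisymm hMT (fun w hw => h w hw))
    obtain ⟨p, q, hpM, hqM, _, hqT, hpq⟩ := exit_lemma (hconn x hx t htT) hxM htM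
    have hnew : M ∪ {q} ∈ 𝒞 := by
      refine ⟨absorb hP hM hpM hpq hqM, ?_, Or.inl hxM⟩
      intro w hw
      rcases hw with h | h
      · exact hMT h
      · rw [Set.mem_singleton_iff] at h; exact h ▸ hqT
    have hle : M.ncard ≤ (M ∪ {q}).ncard :=
      Set.ncard_le_ncard Set.subset_union_left (Set.toFinite _)
    have := hMmax _ hnew hle
    have hlt : M.ncard < (M ∪ {q}).ncard := by
      refine Set.ncard_lt_ncard ?_ (Set.toFinite _)
      constructor
      · exact Set.subset_union_left
      · intro h
        exact hqM (h (Or.inr rfl))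
    omega

end Patch

namespace Patch

variable {Ω : Type*} {P : Set (Set Ω)}

theorem inter_empty_elim {X Y : Set Ω} (h : X ∩ Y = ∅) {w : Ω} (hX : w ∈ X) (hY : w ∈ Y) :
    False := by
  have hw : w ∈ X ∩ Y := ⟨hX, hY⟩
  rw [h] at hw; exact hw

theorem conn_union_bridge {E F : Set Ω} (hE : ConnIn P E) (hF : ConnIn P F)
    (hbr : ∃ p ∈ E, ∃ q ∈ F, Adjv P p q) : ConnIn P (E ∪ F) := by
  obtain ⟨p, hp, q, hq, hpq⟩ := hbr
  have hbstep : Relation.ReflTransGen (stepIn P (E ∪ F)) p q :=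
    Relation.ReflTransGen.single ⟨Or.inl hp, Or.inr hq, hpq⟩
  intro a ha b hb
  have toE : ∀ x ∈ E, Relation.ReflTransGen (stepIn P (E ∪ F)) x p :=
    fun x hx => rtg_mono Set.subset_union_left (hE x hx p hp)
  have toF : ∀ x ∈ F, Relation.ReflTransGen (stepIn P (E ∪ F)) x q :=
    fun x hx => rtg_mono Set.subset_union_right (hF x hx q hq)
  rcases ha with ha | ha <;> rcases hb with hb | hb
  · exact rtg_mono Set.subset_union_left (hE a ha b hb)
  · exact ((toE a ha).trans hbstep).trans (rtg_symm (toF b hb))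
  · exact ((toF a ha).trans (rtg_symm hbstep)).trans (rtg_symm (toE b hb))
  · exact rtg_mono Set.subset_union_right (hF a ha b hb)

theorem side_lemma {E F G : Set Ω} (hG : ConnIn P G) (hGsub : G ⊆ E ∪ F)
    (hnc : ¬∃ p ∈ E, ∃ q ∈ F, Adjv P p q) (hEF : E ∩ F = ∅)
    (hGne : G.Nonempty) : G ⊆ E ∨ G ⊆ F := by
  have stay : ∀ x y, Relation.ReflTransGen (stepIn P G) x y → x ∈ E → y ∈ E := by
    intro x y h hx
    induction h with
    | refl => exact hx
    | tail h' hs ih =>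
      rename_i c d
      have hcE := ih
      rcases hGsub hs.2.1 with hd | hd
      · exact hd
      · exact absurd ⟨c, hcE, d, hd, hs.2.2⟩ hnc
  have stayF : ∀ x y, Relation.ReflTransGen (stepIn P G) x y → x ∈ F → y ∈ F := by
    intro x y h hx
    induction h with
    | refl => exact hx
    | tail h' hs ih =>
      rename_i c d
      have hcF := ih
      rcases hGsub hs.2.1 with hd | hd
      · exact absurd ⟨d, hd, c, hcF, hs.2.2.symm'⟩ hnc
      · exact hd
  obtain ⟨g, hg⟩ := hGne
  rcases hGsub hg with hgE | hgF
  · exact Or.inl (fun y hy => stay g y (hG g hg y hy) hgE)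
  · exact Or.inr (fun y hy => stayF g y (hG g hg y hy) hgF)

/-- Connectivity theorem: in a crisp patchwork on a finite type, every proper member is
connected. -/
theorem crisp_conn [Finite Ω] (hP : IsPatchwork P) (hCr : Crisp P) :
    ∀ D ∈ P, D ≠ Set.univ → ConnIn P D := by
  suffices h : ∀ n, ∀ D ∈ P, D ≠ Set.univ → D.ncard ≤ n → ConnIn P D by
    intro D hD hDu
    exact h D.ncard D hD hDu le_rfl
  intro n
  induction n with
  | zero =>
    intro D _ _ hcard
    have : D = ∅ := by
      rw [← Set.ncard_eq_zero (Set.toFinite D)]; omega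
    intro a ha
    rw [this] at ha; exact absurd ha (Set.notMem_empty a)
  | succ n ih =>
    intro D hD hDu hcard
    by_cases hss : D.Subsingleton
    · intro a ha b hb
      rw [hss ha hb]
    · obtain ⟨x, hx, y, hy, hxy⟩ := Set.not_subsingleton_iff.1 hss
      have hDne : D.Nonempty := ⟨x, hx⟩
      have hnotaut : ¬Autonomous P D := by
        intro haut
        rcases hCr D haut with h | ⟨z, hz⟩
        · exact hDu h
        · rw [hz] at hx hy
          exact hxy ((Set.mem_singleton_iff.1 hx).trans (Set.mem_singleton_iff.1 hy).symm)
      have hov : ∃ B ∈ P, Overlap D B := by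
        by_contra h
        push_neg at h
        exact hnotaut ⟨hD, hDne, h⟩
      obtain ⟨B, hB, hovDB⟩ := hov
      set E := D ∩ B with hEdef
      set F := D \ B with hFdef
      have hE : E ∈ P := pw_inter hP hD hB hovDB
      have hF : F ∈ P := pw_diff hP hD hB hovDB
      have hEne : E.Nonempty := hovDB.1
      have hFne : F.Nonempty := by
        obtain ⟨w, hw⟩ := Set.not_subset.1 hovDB.2.1
        exact ⟨w, hw.1, hw.2⟩
      have hEF : E ∩ F = ∅ := by
        ext w; simp only [Set.mem_inter_iff, Set.mem_empty_iff_false, iff_false]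
        rintro ⟨⟨_, hw2⟩, ⟨_, hw4⟩⟩; exact hw4 hw2
      have hEFD : E ∪ F = D := Set.inter_union_diff D B
      have hsubD : ∀ {G : Set Ω}, G ⊆ D → G ≠ Set.univ := by
        intro G hG hGu
        exact hDu (Set.eq_univ_of_univ_subset (hGu ▸ hG))
      have hsmaller : ∀ {G : Set Ω}, G ⊆ D → G ≠ D → G.ncard ≤ n := by
        intro G hG hGne
        have : G.ncard < D.ncard := Set.ncard_lt_ncard ⟨hG, fun h => hGne (Set.Subset.antisymm hG h)⟩ (Set.toFinite D)
        omega
      have hED : E ≠ D := by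
        intro h
        obtain ⟨w, hw⟩ := hFne
        have hwE : w ∈ E := by rw [h]; exact hw.1
        exact hw.2 hwE.2
      have hFD : F ≠ D := by
        intro h
        obtain ⟨w, hw⟩ := hEne
        have hwF : w ∈ F := by rw [h]; exact hw.1
        exact hwF.2 hw.2
      have hEsub : E ⊆ D := Set.inter_subset_left
      have hFsub : F ⊆ D := Set.diff_subset
      have hconnE : ConnIn P E := ih E hE (hsubD hEsub) (hsmaller hEsub hED)
      have hconnF : ConnIn P F := ih F hF (hsubD hFsub) (hsmaller hFsub hFD)
      by_cases hcross : ∃ p ∈ E, ∃ q ∈ F, Adjv P p q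
      · rw [← hEFD]
        exact conn_union_bridge hconnE hconnF hcross
      · exfalso
        -- dichotomy
        have hdich : ∀ B' ∈ P, Overlap D B' → D ∩ B' = E ∨ D ∩ B' = F := by
          intro B' hB' hov'
          set E' := D ∩ B' with hE'def
          set F' := D \ B' with hF'def
          have hE' : E' ∈ P := pw_inter hP hD hB' hov'
          have hF' : F' ∈ P := pw_diff hP hD hB' hov'
          have hE'ne : E'.Nonempty := hov'.1
          have hF'ne : F'.Nonempty := by
            obtain ⟨w, hw⟩ := Set.not_subset.1 hov'.2.1
            exact ⟨w, hw.1, hw.2⟩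
          have hE'D : E' ≠ D := by
            intro h
            obtain ⟨w, hw⟩ := hF'ne
            have hwE : w ∈ E' := by rw [h]; exact hw.1
            exact hw.2 hwE.2
          have hF'D : F' ≠ D := by
            intro h
            obtain ⟨w, hw⟩ := hE'ne
            have hwF : w ∈ F' := by rw [h]; exact hw.1
            exact hwF.2 hw.2
          have hE'sub : E' ⊆ D := Set.inter_subset_left
          have hF'sub : F' ⊆ D := Set.diff_subset
          have hconnE' : ConnIn P E' := ih E' hE' (hsubD hE'sub) (hsmaller hE'sub hE'D)
          have hconnF' : ConnIn P F' := ih F' hF' (hsubD hF'sub) (hsmaller hF'sub hF'D)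
          have hsE' := side_lemma hconnE' (hEFD ▸ hE'sub) hcross hEF hE'ne
          have hsF' := side_lemma hconnF' (hEFD ▸ hF'sub) hcross hEF hF'ne
          have hpart : ∀ w ∈ D, w ∈ E' ∨ w ∈ F' := by
            intro w hw
            by_cases h : w ∈ B'
            · exact Or.inl ⟨hw, h⟩
            · exact Or.inr ⟨hw, h⟩
          rcases hsE' with h1 | h1 <;> rcases hsF' with h2 | h2
          · exfalso
            obtain ⟨w, hw⟩ := hFne
            rcases hpart w (hFsub hw) with h | h
            · exact inter_empty_elim hEF (h1 h) hw
            · exact inter_empty_elim hEF (h2 h) hw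
          · left
            apply Set.Subset.antisymm h1
            intro w hwE
            rcases hpart w (hEsub hwE) with h | h
            · exact h
            · exact absurd (inter_empty_elim hEF hwE (h2 h)) (fun f => f)
          · right
            apply Set.Subset.antisymm h1
            intro w hwF
            rcases hpart w (hFsub hwF) with h | h
            · exact h
            · exact absurd (inter_empty_elim hEF (h2 h) hwF) (fun f => f)
          · exfalso
            obtain ⟨w, hw⟩ := hEne
            rcases hpart w (hEsub hw) with h | h
            · exact inter_empty_elim hEF hw (h1 h)
            · exact inter_empty_elim hEF hw (h2 h)
        -- each side is a singleton
        have hside : ∀ G, G ∈ P → G ⊆ D → G ≠ D → G.Nonempty → G ⊆ E ∨ G ⊆ F := by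
          intro G hG hGsub hGne hGn
          exact side_lemma (ih G hG (hsubD hGsub) (hsmaller hGsub hGne)) (hEFD ▸ hGsub)
            hcross hEF hGn
        have half : ∀ X Y : Set Ω, X ∈ P → X ∪ Y = D → X ∩ Y = ∅ → Y.Nonempty →
            (∀ G, G ∈ P → G ⊆ D → G ≠ D → G.Nonempty → G ⊆ X ∨ G ⊆ Y) →
            (∀ B' ∈ P, Overlap D B' → D ∩ B' = X ∨ D ∩ B' = Y) → X.Subsingleton := by
          intro X Y hXP hXY hXYd hYne hsideXY hdich'
          intro u hu v hv
          by_contra huv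
          have hXsub : X ⊆ D := hXY ▸ Set.subset_union_left
          have hXU : X ≠ Set.univ := hsubD hXsub
          have hXne : X.Nonempty := ⟨u, hu⟩
          have hnaX : ¬Autonomous P X := by
            intro haut
            rcases hCr X haut with h | ⟨z, hz⟩
            · exact hXU h
            · rw [hz] at hu hv
              exact huv (hu.trans hv.symm)
          have hovX : ∃ B₃ ∈ P, Overlap X B₃ := by
            by_contra h
            push_neg at h
            exact hnaX ⟨hXP, hXne, h⟩
          obtain ⟨B₃, hB₃, hovXB₃⟩ := hovX
          by_cases hBD : B₃ ⊆ D
          · have hB₃D : B₃ ≠ D := fun h => hovXB₃.2.1 (h ▸ hXsub)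
            have hB₃ne : B₃.Nonempty := by
              obtain ⟨w, hw⟩ := hovXB₃.1
              exact ⟨w, hw.2⟩
            rcases hsideXY B₃ hB₃ hBD hB₃D hB₃ne with h | h
            · exact hovXB₃.2.2 h
            · obtain ⟨w, hw1, hw2⟩ := hovXB₃.1
              exact inter_empty_elim hXYd hw1 (h hw2)
          · have hovDB₃ : Overlap D B₃ := by
              refine ⟨?_, ?_, hBD⟩
              · obtain ⟨w, hw1, hw2⟩ := hovXB₃.1
                exact ⟨w, hXsub hw1, hw2⟩
              · intro h
                obtain ⟨w, hw⟩ := Set.not_subset.1 hovXB₃.2.1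
                exact hw.2 (h (hXsub hw.1))
            rcases hdich' B₃ hB₃ hovDB₃ with h | h
            · obtain ⟨w, hw⟩ := Set.not_subset.1 hovXB₃.2.1
              have hmem : w ∈ D ∩ B₃ := by rw [h]; exact hw.1
              exact hw.2 hmem.2
            · obtain ⟨w, hw1, hw2⟩ := hovXB₃.1
              have hmem : w ∈ D ∩ B₃ := ⟨hXsub hw1, hw2⟩
              rw [h] at hmem
              exact inter_empty_elim hXYd hw1 hmem
        have hFE : F ∪ E = D := by rw [Set.union_comm]; exact hEFD
        have hFEd : F ∩ E = ∅ := by rw [Set.inter_comm]; exact hEF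
        have hssE : E.Subsingleton :=
          half E F hE hEFD hEF hFne hside (fun B' h1 h2 => hdich B' h1 h2)
        have hssF : F.Subsingleton :=
          half F E hF hFE hFEd hEne
            (fun G h1 h2 h3 h4 => (hside G h1 h2 h3 h4).symm)
            (fun B' h1 h2 => (hdich B' h1 h2).symm)
        obtain ⟨e, he⟩ := hEne
        obtain ⟨f, hf⟩ := hFne
        have hEe : E = {e} := by
          apply Set.eq_singleton_iff_unique_mem.2
          exact ⟨he, fun w hw => hssE hw he⟩
        have hFf : F = {f} := by
          apply Set.eq_singleton_iff_unique_mem.2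
          exact ⟨hf, fun w hw => hssF hw hf⟩
        have hef : e ≠ f := by
          intro h
          exact inter_empty_elim hEF he (h ▸ hf)
        have hDef : D = ({e, f} : Set Ω) := by
          rw [← hEFD, hEe, hFf]
          ext w; simp; tauto
        exact hcross ⟨e, he, f, hf, ⟨hef, hDef ▸ hD⟩⟩

end Patch

namespace Patch

variable {Ω : Type*} {P : Set (Set Ω)}

theorem conn_of_subsingleton {T : Set Ω} (h : T.Subsingleton) : ConnIn P T := by
  intro a ha b hb
  rw [h ha hb]

/-- Two edges at a common vertex produce singletons and the path set. -/
theorem two_edges (hP : IsPatchwork P) {x b c : Ω} (hb : Adjv P x b) (hc : Adjv P x c)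
    (hbc : b ≠ c) :
    ({x} : Set Ω) ∈ P ∧ ({b} : Set Ω) ∈ P ∧ ({c} : Set Ω) ∈ P ∧ ({x, b, c} : Set Ω) ∈ P := by
  have hxb := hb.2; have hxc := hc.2
  have obc : Overlap ({x, b} : Set Ω) {x, c} := by
    refine ⟨⟨x, by simp, by simp⟩, fun h => ?_, fun h => ?_⟩
    · have := h (by simp : b ∈ ({x, b} : Set Ω))
      simp only [Set.mem_insert_iff, Set.mem_singleton_iff] at this
      rcases this with h' | h' <;> [exact hb.1 h'.symm; exact hbc h']
    · have := h (by simp : c ∈ ({x, c} : Set Ω))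
      simp only [Set.mem_insert_iff, Set.mem_singleton_iff] at this
      rcases this with h' | h' <;> [exact hc.1 h'.symm; exact hbc h'.symm]
  refine ⟨?_, ?_, ?_, ?_⟩
  · have := pw_inter hP hxb hxc obc
    have e : ({x, b} : Set Ω) ∩ {x, c} = {x} := by
      ext y; simp only [Set.mem_inter_iff, Set.mem_insert_iff, Set.mem_singleton_iff]
      constructor
      · rintro ⟨h1 | h1, h2 | h2⟩
        · exact h1
        · exact h1
        · exact h2
        · exact absurd (h1.symm.trans h2) hbc
      · rintro rfl; exact ⟨Or.inl rfl, Or.inl rfl⟩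
    rwa [e] at this
  · have := pw_diff hP hxb hxc obc
    have e : ({x, b} : Set Ω) \ {x, c} = {b} := by
      ext y; simp only [Set.mem_diff, Set.mem_insert_iff, Set.mem_singleton_iff]
      constructor
      · rintro ⟨h1 | h1, h2⟩
        · exact absurd (Or.inl h1) h2
        · exact h1
      · rintro rfl; exact ⟨Or.inr rfl, by rintro (h | h) <;> [exact hb.1 h.symm; exact hbc h]⟩
    rwa [e] at this
  · have := pw_diff hP hxc hxb (overlap_symm obc)
    have e : ({x, c} : Set Ω) \ {x, b} = {c} := by
      ext y; simp only [Set.mem_diff, Set.mem_insert_iff, Set.mem_singleton_iff]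
      constructor
      · rintro ⟨h1 | h1, h2⟩
        · exact absurd (Or.inl h1) h2
        · exact h1
      · rintro rfl; exact ⟨Or.inr rfl, by rintro (h | h) <;> [exact hc.1 h.symm; exact hbc h.symm]⟩
    rwa [e] at this
  · have := pw_union hP hxb hxc obc
    have e : ({x, b} : Set Ω) ∪ {x, c} = {x, b, c} := by
      ext y; simp only [Set.mem_union, Set.mem_insert_iff, Set.mem_singleton_iff]; tauto
    rwa [e] at this

/-- Components of the graph restricted to a subset. -/
def comp (P : Set (Set Ω)) (T : Set Ω) (x : Ω) : Set Ω :=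
  {y | Relation.ReflTransGen (stepIn P T) x y}

theorem comp_refl {T : Set Ω} (x : Ω) : x ∈ comp P T x := Relation.ReflTransGen.refl

theorem comp_subset {T : Set Ω} {x : Ω} (hx : x ∈ T) : comp P T x ⊆ T := by
  intro y hy
  induction hy with
  | refl => exact hx
  | tail _ hs _ => exact hs.2.1

theorem comp_closed {T : Set Ω} {x u w : Ω} (hu : u ∈ comp P T x) (hs : stepIn P T u w) :
    w ∈ comp P T x := Relation.ReflTransGen.tail hu hs

theorem comp_conn {T : Set Ω} {x : Ω} : ConnIn P (comp P T x) := by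
  have key : ∀ y ∈ comp P T x, Relation.ReflTransGen (stepIn P (comp P T x)) x y := by
    intro y hy
    induction hy with
    | refl => exact Relation.ReflTransGen.refl
    | tail h hs ih =>
      rename_i u w
      exact Relation.ReflTransGen.tail ih ⟨h, Relation.ReflTransGen.tail h hs, hs.2.2⟩
  intro a ha b hb
  exact (rtg_symm (key a ha)).trans (key b hb)

theorem comp_eq_of_mem {T : Set Ω} {x u : Ω} (hu : u ∈ comp P T x) :
    comp P T u = comp P T x := by
  ext y
  constructor
  · intro hy; exact Relation.ReflTransGen.trans hu hy
  · intro hy; exact Relation.ReflTransGen.trans (rtg_symm hu) hy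

/-- Walks to `v` can be rerouted to reach a neighbour of `v` while avoiding `v`. -/
theorem reach_avoid {v t : Ω} (h : Relation.ReflTransGen (stepIn P Set.univ) t v)
    (ht : t ≠ v) :
    ∃ w, Adjv P w v ∧ Relation.ReflTransGen (stepIn P (Set.univ \ {v})) t w := by
  induction h using Relation.ReflTransGen.head_induction_on with
  | refl => exact absurd rfl ht
  | @head s c hs hrest ih =>
    by_cases hc : c = v
    · subst hc
      exact ⟨s, hs.2.2, Relation.ReflTransGen.refl⟩
    · obtain ⟨w, hw1, hw2⟩ := ih hc
      refine ⟨w, hw1, Relation.ReflTransGen.head ⟨⟨trivial, ht⟩, ⟨trivial, hc⟩, hs.2.2⟩ hw2⟩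

/-- Removing a vertex with a unique neighbour preserves connectivity. -/
theorem remove_unique_nbr {T : Set Ω} {v x : Ω}
    (hnb : ∀ w, w ∈ T → Adjv P v w → w = x) :
    ∀ a b, Relation.ReflTransGen (stepIn P T) a b →
      (a ≠ v → b ≠ v → Relation.ReflTransGen (stepIn P (T \ {v})) a b) ∧
      (a = v → b ≠ v → Relation.ReflTransGen (stepIn P (T \ {v})) x b) := by
  intro a b h
  induction h using Relation.ReflTransGen.head_induction_on with
  | refl =>
    exact ⟨fun _ _ => Relation.ReflTransGen.refl, fun h1 h2 => absurd h1 h2⟩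
  | @head s c hs hrest ih =>
    constructor
    · intro hav hbv
      by_cases hcv : c = v
      · have hax : s = x := hnb s hs.1 (hcv ▸ hs.2.2).symm'
        exact hax ▸ (ih.2 hcv hbv)
      · exact Relation.ReflTransGen.head ⟨⟨hs.1, hav⟩, ⟨hs.2.1, hcv⟩, hs.2.2⟩ (ih.1 hcv hbv)
    · intro hav hbv
      have hcx : c = x := hnb c hs.2.1 (hav ▸ hs.2.2)
      by_cases hcv : c = v
      · exact ih.2 hcv hbv
      · exact hcx ▸ (ih.1 hcv hbv)

theorem conn_remove {T : Set Ω} {v x : Ω} (hconn : ConnIn P T)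
    (hnb : ∀ w, w ∈ T → Adjv P v w → w = x) : ConnIn P (T \ {v}) := by
  intro a ha b hb
  exact (remove_unique_nbr hnb a b (hconn a ha.1 b hb.1)).1 ha.2 hb.2

/-- In a crisp connected patchwork with at least one vertex, not every vertex can have two
distinct neighbours. -/
theorem not_all_deg_two [Finite Ω] (hP : IsPatchwork P) (hN : NoThreePairwiseAdjacent P)
    (hCr : Crisp P) (hconn : ConnIn P Set.univ) (v₀ : Ω)
    (hdeg : ∀ v : Ω, ∃ a b, a ≠ b ∧ Adjv P v a ∧ Adjv P v b) : False := by
  classical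
  -- any neighbour of v is one of the two given ones
  have nbr_char : ∀ v a b w, a ≠ b → Adjv P v a → Adjv P v b → Adjv P v w → w = a ∨ w = b := by
    intro v a b w hab ha hb hw
    by_contra h
    push_neg at h
    exact deg_le_two hP hN hw ha hb h.1 h.2 hab
  -- coverage
  have cover : ∀ v t : Ω, t ≠ v → ∃ w, Adjv P w v ∧ t ∈ comp P (Set.univ \ {v}) w := by
    intro v t ht
    obtain ⟨w, hw1, hw2⟩ := reach_avoid (P := P) (hconn t trivial v trivial) ht
    exact ⟨w, hw1, rtg_symm hw2⟩
  -- "bad" configurations admit an infinite descent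
  have desc : ∀ n v C, (∃ u, u ≠ v ∧ C = comp P (Set.univ \ {v}) u ∧ C ≠ Set.univ \ {v}) →
      C.ncard ≤ n → False := by
    intro n
    induction n with
    | zero =>
      intro v C hBad hcard
      obtain ⟨u, hu, hC, hCne⟩ := hBad
      have hCempty : C = ∅ := by
        rw [← Set.ncard_eq_zero (Set.toFinite C)]; omega
      have : u ∈ C := hC ▸ comp_refl u
      rw [hCempty] at this
      exact this
    | succ n ih =>
      intro v C hBad hcard
      obtain ⟨u, hu, hC, hCne⟩ := hBad
      have hCsub : C ⊆ Set.univ \ {v} := hC ▸ comp_subset ⟨trivial, hu⟩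
      -- an attach vertex α : a neighbour of v lying in C
      obtain ⟨α, hα1, hα2⟩ : ∃ w, Adjv P w v ∧ w ∈ C := by
        obtain ⟨w, hw1, hw2⟩ := reach_avoid (P := P) (hconn u trivial v trivial) hu
        exact ⟨w, hw1, hC ▸ hw2⟩
      -- the other neighbour β of v
      obtain ⟨a, b, hab, hva, hvb⟩ := hdeg v
      have hαab : α = a ∨ α = b := nbr_char v a b α hab hva hvb hα1.symm'
      set β := if α = a then b else a with hβdef
      have hvβ : Adjv P v β := by
        by_cases h : α = a
        · rw [hβdef, if_pos h]; exact hvb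
        · rw [hβdef, if_neg h]; exact hva
      have nbrv : ∀ w, Adjv P v w → w = α ∨ w = β := by
        intro w hw
        rcases nbr_char v a b w hab hva hvb hw with h | h
        · by_cases h2 : α = a
          · exact Or.inl (h.trans h2.symm)
          · right; rw [hβdef, if_neg h2]; exact h
        · by_cases h2 : α = a
          · right; rw [hβdef, if_pos h2]; exact h
          · exact Or.inl (h.trans (hαab.resolve_left h2).symm)
      -- β not in C (else C is everything)
      have hβC : β ∉ C := by
        intro hβ
        apply hCne
        apply Set.Subset.antisymm hCsub
        intro t ht
        have htv : t ≠ v := ht.2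
        obtain ⟨w, hw1, hw2⟩ := cover v t htv
        have hwC : w ∈ C := by
          rcases nbrv w hw1.symm' with h | h
          · exact h ▸ hα2
          · exact h ▸ hβ
        rw [hC] at hwC ⊢
        exact (comp_eq_of_mem hwC) ▸ hw2
      -- α's two neighbours: v and α'
      obtain ⟨c, d, hcd, hαc, hαd⟩ := hdeg α
      have hvnbr : v = c ∨ v = d := nbr_char α c d v hcd hαc hαd hα1
      set α' := if v = c then d else c with hα'def
      have hαα' : Adjv P α α' := by
        by_cases h : v = c
        · rw [hα'def, if_pos h]; exact hαd
        · rw [hα'def, if_neg h]; exact hαc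
      have hα'v : α' ≠ v := by
        by_cases h2 : v = c
        · rw [hα'def, if_pos h2]; exact fun h' => hcd (h2.symm.trans h'.symm)
        · rw [hα'def, if_neg h2]; exact fun h' => h2 h'.symm
      have nbrα : ∀ w, Adjv P α w → w = v ∨ w = α' := by
        intro w hw
        rcases nbr_char α c d w hcd hαc hαd hw with h | h
        · by_cases h2 : v = c
          · exact Or.inl (h.trans h2.symm)
          · right; rw [hα'def, if_neg h2]; exact h
        · by_cases h2 : v = c
          · right; rw [hα'def, if_pos h2]; exact h
          · exact Or.inl (h.trans (hvnbr.resolve_left h2).symm)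
      have hα'α : α' ≠ α := by
        intro h
        exact hαα'.1 h.symm
      have hα'C : α' ∈ C := by
        rw [hC]
        refine comp_closed (hC ▸ hα2) ⟨hCsub hα2, ⟨trivial, hα'v⟩, hαα'⟩
      -- C is connected, α has unique neighbour α' inside C
      have hconnC : ConnIn P C := hC ▸ comp_conn
      have hnbC : ∀ w, w ∈ C → Adjv P α w → w = α' := by
        intro w hwC hw
        rcases nbrα w hw with h | h
        · exfalso; exact (hCsub hwC).2 h
        · exact h
      have hconnC' : ConnIn P (C \ {α}) := conn_remove hconnC hnbC
      -- C \ {α} is the component of α' in univ \ {α}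
      have hkey : C \ {α} = comp P (Set.univ \ {α}) α' := by
        apply Set.Subset.antisymm
        · intro t ht
          have : Relation.ReflTransGen (stepIn P (C \ {α})) α' t :=
            hconnC' α' ⟨hα'C, hα'α⟩ t ht
          exact rtg_mono (T' := Set.univ \ {α}) (fun y hy => ⟨trivial, hy.2⟩) this
        · intro t ht
          have : ∀ s t', Relation.ReflTransGen (stepIn P (Set.univ \ {α})) s t' →
              s ∈ C \ {α} → t' ∈ C \ {α} := by
            intro s t' hst hsC
            induction hst with
            | refl => exact hsC
            | tail h hs ih =>
              rename_i m w
              have hmC := ih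
              have hwα : w ≠ α := hs.2.1.2
              have hwv : w ≠ v := by
                intro h'
                rcases nbrv m (h' ▸ hs.2.2).symm' with h'' | h''
                · exact hmC.2 h''
                · exact hβC (h'' ▸ hmC.1)
              refine ⟨?_, hwα⟩
              rw [hC]
              exact comp_closed (hC ▸ hmC.1) ⟨hCsub hmC.1, ⟨trivial, hwv⟩, hs.2.2⟩
          exact this α' t ht ⟨hα'C, hα'α⟩
      -- descent
      have hlt : (C \ {α}).ncard < C.ncard :=
        Set.ncard_lt_ncard ⟨Set.diff_subset, fun h => (h hα2).2 rfl⟩ (Set.toFinite C)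
      refine ih α (C \ {α}) ⟨α', hα'α, hkey, ?_⟩ (by omega)
      intro h
      have : v ∈ C \ {α} := h.symm ▸ ⟨trivial, fun e => hα1.1 e.symm⟩
      exact (hCsub this.1).2 rfl
  -- no bad configurations: every punctured graph is connected
  have nobad : ∀ v u : Ω, u ≠ v → comp P (Set.univ \ {v}) u = Set.univ \ {v} := by
    intro v u hu
    by_contra h
    exact desc (comp P (Set.univ \ {v}) u).ncard v _ ⟨u, hu, rfl, h⟩ le_rfl
  -- build the triangle at v₀
  obtain ⟨a, b, hab, hwa, hwb⟩ := hdeg v₀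
  set w := v₀
  have haw : a ≠ w := hwa.1.symm
  have hbw : b ≠ w := hwb.1.symm
  obtain ⟨hwP, haP, hbP, _⟩ := two_edges hP hwa hwb hab
  set T := Set.univ \ {w} with hTdef
  have hTconn : ConnIn P T := by
    rw [hTdef, ← nobad w a haw]
    exact comp_conn
  have haT : a ∈ T := ⟨trivial, haw⟩
  have hbT : b ∈ T := ⟨trivial, hbw⟩
  have hTP : T ∈ P := conn_mem hP hTconn ⟨a, haT, b, hbT, hab⟩
  -- a's unique other neighbour
  obtain ⟨c, d, hcd, hac, had⟩ := hdeg a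
  have hwnbr : w = c ∨ w = d := by
    by_contra h
    push_neg at h
    exact deg_le_two hP hN hwa.symm' hac had h.1 h.2 hcd
  set a' := if w = c then d else c with ha'def
  have nbra : ∀ z, z ∈ T → Adjv P a z → z = a' := by
    intro z hz hzadj
    have hzcd : z = c ∨ z = d := by
      by_contra h
      push_neg at h
      exact deg_le_two hP hN hzadj hac had h.1 h.2 hcd
    rcases hzcd with h | h
    · by_cases h2 : w = c
      · exact absurd (h.trans h2.symm) hz.2
      · rw [ha'def, if_neg h2]; exact h
    · by_cases h2 : w = c
      · rw [ha'def, if_pos h2]; exact h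
      · exact absurd (h.trans (hwnbr.resolve_left h2).symm) hz.2
  have hconnTa : ConnIn P (T \ {a}) := conn_remove hTconn nbra
  have hbTa : b ∈ T \ {a} := ⟨hbT, fun e => hab e.symm⟩
  have hTaP : T \ {a} ∈ P := by
    by_cases hss : (T \ {a}).Subsingleton
    · have : T \ {a} = {b} := by
        apply Set.eq_singleton_iff_unique_mem.2
        exact ⟨hbTa, fun z hz => hss hz hbTa⟩
      rw [this]; exact hbP
    · obtain ⟨p, hp, q, hq, hpq⟩ := Set.not_subsingleton_iff.1 hss
      exact conn_mem hP hconnTa ⟨p, hp, q, hq, hpq⟩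
  have hwTa : w ∉ T \ {a} := fun h => h.1.2 rfl
  have hUwP : (T \ {a}) ∪ {w} ∈ P := by
    have hconnU : ConnIn P ((T \ {a}) ∪ {w}) :=
      conn_union_bridge hconnTa (conn_of_subsingleton Set.subsingleton_singleton)
        ⟨b, hbTa, w, rfl, hwb.symm'⟩
    exact conn_mem hP hconnU ⟨b, Or.inl hbTa, w, Or.inr rfl, hbw⟩
  have hU1 : ({w} : Set Ω) ∪ {a} = ({w, a} : Set Ω) := by ext y; simp; tauto
  have hU2 : ({a} : Set Ω) ∪ (T \ {a}) = T := by
    apply Set.Subset.antisymm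
    · rintro y (rfl | h)
      · exact haT
      · exact h.1
    · intro y hy
      by_cases h : y = a
      · exact Or.inl h
      · exact Or.inr ⟨hy, h⟩
  have hU3 : ({w} : Set Ω) ∪ (T \ {a}) = (T \ {a}) ∪ {w} := Set.union_comm _ _
  refine mk_triangle hN hwP haP hTaP ⟨w, rfl⟩ ⟨a, rfl⟩ ⟨b, hbTa⟩ ?_ ?_ ?_ ?_ ?_ ?_
  · ext y; simp only [Set.mem_inter_iff, Set.mem_singleton_iff, Set.mem_empty_iff_false, iff_false]
    rintro ⟨rfl, h⟩; exact haw h.symm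
  · ext y; simp only [Set.mem_inter_iff, Set.mem_singleton_iff, Set.mem_empty_iff_false, iff_false]
    rintro ⟨rfl, h⟩; exact hwTa h
  · ext y; simp only [Set.mem_inter_iff, Set.mem_singleton_iff, Set.mem_empty_iff_false, iff_false]
    rintro ⟨rfl, h⟩; exact h.2 rfl
  · rw [hU1]; exact hwa.2
  · rw [hU3]; exact hUwP
  · rw [hU2]; exact hTP

end Patch

namespace Patch

variable {Ω : Type*} {P : Set (Set Ω)}

/-- `a` and `b` are consecutive (in either order) for the linear order `L`. -/
def EdgeConsec (L : LinearOrder Ω) (a b : Ω) : Prop :=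
  (L.lt a b ∧ ∀ z, ¬(L.lt a z ∧ L.lt z b)) ∨ (L.lt b a ∧ ∀ z, ¬(L.lt b z ∧ L.lt z a))

theorem lift'_le_iff {α β : Type*} [LinearOrder β] (f : α → β) (hinj : Function.Injective f)
    (p q : α) : (LinearOrder.lift' f hinj).le p q ↔ f p ≤ f q := Iff.rfl

theorem lift'_lt_iff {α β : Type*} [LinearOrder β] (f : α → β) (hinj : Function.Injective f)
    (p q : α) : (LinearOrder.lift' f hinj).lt p q ↔ f p < f q := by
  rw [@lt_iff_le_not_ge _ (LinearOrder.lift' f hinj).toPreorder, lt_iff_le_not_ge]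
  exact Iff.rfl

end Patch

namespace Patch

section Block

variable {Ω : Type*}

open Classical in
/-- The block substitution map. -/
noncomputable def bm (A S : Set Ω) (a : Ω) (haS : a ∈ S) (hSA : ∀ x, x ∉ A → x ∈ S) :
    Ω → Lex (↥S × WithBot ↥A) := fun x =>
  if h : x ∈ A then toLex (⟨a, haS⟩, ((⟨x, h⟩ : ↥A) : WithBot ↥A))
  else toLex (⟨x, hSA x h⟩, ⊥)

variable {A S : Set Ω} {a : Ω} {haS : a ∈ S} {hSA : ∀ x, x ∉ A → x ∈ S}

theorem bm_pos {x : Ω} (h : x ∈ A) :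
    bm A S a haS hSA x = toLex (⟨a, haS⟩, ((⟨x, h⟩ : ↥A) : WithBot ↥A)) := dif_pos h

theorem bm_neg {x : Ω} (h : x ∉ A) :
    bm A S a haS hSA x = toLex (⟨x, hSA x h⟩, ⊥) := dif_neg h

theorem bm_inj (ha : a ∈ A) : Function.Injective (bm A S a haS hSA) := by
  intro p q hpq
  by_cases hp : p ∈ A <;> by_cases hq : q ∈ A
  · rw [bm_pos hp, bm_pos hq] at hpq
    have h2 : ((⟨p, hp⟩ : ↥A) : WithBot ↥A) = ((⟨q, hq⟩ : ↥A) : WithBot ↥A) :=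
      congrArg (fun z => (ofLex z).2) hpq
    exact congrArg Subtype.val (WithBot.coe_injective h2)
  · rw [bm_pos hp, bm_neg hq] at hpq
    exact absurd (congrArg (fun z => (ofLex z).2) hpq) WithBot.coe_ne_bot
  · rw [bm_neg hp, bm_pos hq] at hpq
    exact absurd (congrArg (fun z => (ofLex z).2) hpq).symm WithBot.coe_ne_bot
  · rw [bm_neg hp, bm_neg hq] at hpq
    exact congrArg Subtype.val (congrArg (fun z => (ofLex z).1) hpq)

variable [LinearOrder ↥S] [LinearOrder ↥A]

theorem bm_le_AA {p q : Ω} (hp : p ∈ A) (hq : q ∈ A) :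
    bm A S a haS hSA p ≤ bm A S a haS hSA q ↔ (⟨p, hp⟩ : ↥A) ≤ ⟨q, hq⟩ := by
  rw [bm_pos hp, bm_pos hq, Prod.Lex.le_iff]
  constructor
  · rintro (h | ⟨_, h⟩)
    · exact absurd h (lt_irrefl _)
    · exact WithBot.coe_le_coe.1 h
  · intro h
    exact Or.inr ⟨rfl, WithBot.coe_le_coe.2 h⟩

theorem bm_le_AN (ha : a ∈ A) {p q : Ω} (hp : p ∈ A) (hq : q ∉ A) :
    bm A S a haS hSA p ≤ bm A S a haS hSA q ↔
      (⟨a, haS⟩ : ↥S) < ⟨q, hSA q hq⟩ := by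
  rw [bm_pos hp, bm_neg hq, Prod.Lex.le_iff]
  constructor
  · rintro (h | ⟨h, _⟩)
    · exact h
    · have h' : a = q := congrArg Subtype.val h
      exact absurd (h' ▸ ha) hq
  · exact Or.inl

theorem bm_le_NA (ha : a ∈ A) {p q : Ω} (hp : p ∉ A) (hq : q ∈ A) :
    bm A S a haS hSA p ≤ bm A S a haS hSA q ↔
      (⟨p, hSA p hp⟩ : ↥S) < ⟨a, haS⟩ := by
  rw [bm_neg hp, bm_pos hq, Prod.Lex.le_iff]
  constructor
  · rintro (h | ⟨h, _⟩)
    · exact h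
    · have h' : p = a := congrArg Subtype.val h
      exact absurd (h'.symm ▸ ha) hp
  · exact Or.inl

theorem bm_le_NN {p q : Ω} (hp : p ∉ A) (hq : q ∉ A) :
    bm A S a haS hSA p ≤ bm A S a haS hSA q ↔
      (⟨p, hSA p hp⟩ : ↥S) ≤ ⟨q, hSA q hq⟩ := by
  rw [bm_neg hp, bm_neg hq, Prod.Lex.le_iff]
  constructor
  · rintro (h | ⟨h, _⟩)
    · exact le_of_lt h
    · exact le_of_eq h
  · intro h
    rcases lt_or_eq_of_le h with h' | h'
    · exact Or.inl h'
    · exact Or.inr ⟨h', le_refl _⟩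

end Block

variable {Ω : Type*} {P : Set (Set Ω)}

theorem pair_preimage {T : Set Ω} {p q : Ω} (hp : p ∈ T) (hq : q ∈ T) :
    ({⟨p, hp⟩, ⟨q, hq⟩} : Set ↥T) = (Subtype.val ⁻¹' {p, q} : Set ↥T) := by
  ext s
  simp only [Set.mem_insert_iff, Set.mem_singleton_iff, Set.mem_preimage]
  constructor
  · rintro (rfl | rfl)
    · exact Or.inl rfl
    · exact Or.inr rfl
  · rintro (h | h)
    · exact Or.inl (Subtype.ext h)
    · exact Or.inr (Subtype.ext h)

theorem glue_block (hP : IsPatchwork P)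
    {A : Set Ω} (hAP : A ∈ P) (hAnov : ∀ B ∈ P, ¬ Overlap A B) {a : Ω} (ha : a ∈ A)
    {x0 y0 : Ω} (hx0 : x0 ∈ A) (hy0 : y0 ∈ A) (hxy0 : x0 ≠ y0)
    {S : Set Ω} (haS : a ∈ S) (hSA : ∀ x, x ∉ A → x ∈ S)
    (L1 : LinearOrder ↥S) (L2 : LinearOrder ↥A)
    (conv1 : ∀ B' ∈ trace P S, IsConvex L1.le B')
    (edge1 : ∀ s t : ↥S, s ≠ t → ({s, t} : Set ↥S) ∈ trace P S → EdgeConsec L1 s t)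
    (conv2 : ∀ B' ∈ trace P A, IsConvex L2.le B')
    (edge2 : ∀ s t : ↥A, s ≠ t → ({s, t} : Set ↥A) ∈ trace P A → EdgeConsec L2 s t) :
    ∃ L : LinearOrder Ω, (∀ B ∈ P, IsConvex L.le B) ∧
      (∀ p q : Ω, p ≠ q → ({p, q} : Set Ω) ∈ P → EdgeConsec L p q) := by
  classical
  have tri : ∀ B, B ∈ P → A ∩ B = ∅ ∨ A ⊆ B ∨ B ⊆ A := by
    intro B hB
    by_cases h1 : A ⊆ B
    · exact Or.inr (Or.inl h1)
    by_cases h2 : B ⊆ A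
    · exact Or.inr (Or.inr h2)
    left
    by_contra h3
    exact hAnov B hB ⟨Set.nonempty_iff_ne_empty.2 h3, h1, h2⟩
  have htr1 : ∀ B, B ∈ P → (Subtype.val ⁻¹' B : Set ↥S) ∈ trace P S := fun B hB => ⟨B, hB, rfl⟩
  have htr2 : ∀ B, B ∈ P → (Subtype.val ⁻¹' B : Set ↥A) ∈ trace P A := fun B hB => ⟨B, hB, rfl⟩
  refine ⟨LinearOrder.lift' (bm A S a haS hSA) (bm_inj ha), ?_, ?_⟩
  · -- convexity
    intro B hB p q r hpq hqr hp hr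
    replace hpq : bm A S a haS hSA p ≤ bm A S a haS hSA q := hpq
    replace hqr : bm A S a haS hSA q ≤ bm A S a haS hSA r := hqr
    rcases tri B hB with hd | hsub | hsup
    · have hpA : p ∉ A := fun h => inter_empty_elim hd h hp
      have hrA : r ∉ A := fun h => inter_empty_elim hd h hr
      by_cases hq : q ∈ A
      · exfalso
        have h1 := (bm_le_NA ha hpA hq).1 hpq
        have h2 := (bm_le_AN ha hq hrA).1 hqr
        exact inter_empty_elim hd ha
          (conv1 _ (htr1 B hB) ⟨p, hSA p hpA⟩ ⟨a, haS⟩ ⟨r, hSA r hrA⟩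
            (le_of_lt h1) (le_of_lt h2) hp hr)
      · exact conv1 _ (htr1 B hB) ⟨p, hSA p hpA⟩ ⟨q, hSA q hq⟩ ⟨r, hSA r hrA⟩
          ((bm_le_NN hpA hq).1 hpq) ((bm_le_NN hq hrA).1 hqr) hp hr
    · by_cases hq : q ∈ A
      · exact hsub hq
      · by_cases hpA : p ∈ A <;> by_cases hrA : r ∈ A
        · exact conv1 _ (htr1 B hB) ⟨a, haS⟩ ⟨q, hSA q hq⟩ ⟨a, haS⟩
            (le_of_lt ((bm_le_AN ha hpA hq).1 hpq)) (le_of_lt ((bm_le_NA ha hq hrA).1 hqr))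
            (hsub ha) (hsub ha)
        · exact conv1 _ (htr1 B hB) ⟨a, haS⟩ ⟨q, hSA q hq⟩ ⟨r, hSA r hrA⟩
            (le_of_lt ((bm_le_AN ha hpA hq).1 hpq)) ((bm_le_NN hq hrA).1 hqr)
            (hsub ha) hr
        · exact conv1 _ (htr1 B hB) ⟨p, hSA p hpA⟩ ⟨q, hSA q hq⟩ ⟨a, haS⟩
            ((bm_le_NN hpA hq).1 hpq) (le_of_lt ((bm_le_NA ha hq hrA).1 hqr))
            hp (hsub ha)
        · exact conv1 _ (htr1 B hB) ⟨p, hSA p hpA⟩ ⟨q, hSA q hq⟩ ⟨r, hSA r hrA⟩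
            ((bm_le_NN hpA hq).1 hpq) ((bm_le_NN hq hrA).1 hqr) hp hr
    · have hpA : p ∈ A := hsup hp
      have hrA : r ∈ A := hsup hr
      by_cases hq : q ∈ A
      · exact conv2 _ (htr2 B hB) ⟨p, hpA⟩ ⟨q, hq⟩ ⟨r, hrA⟩
          ((bm_le_AA hpA hq).1 hpq) ((bm_le_AA hq hrA).1 hqr) hp hr
      · exfalso
        have h1 := (bm_le_AN ha hpA hq).1 hpq
        have h2 := (bm_le_NA ha hq hrA).1 hqr
        exact lt_irrefl _ (lt_trans h1 h2)
  · -- edges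
    intro p q hpq hmem
    have hfle : ∀ u w : Ω,
        (LinearOrder.lift' (bm A S a haS hSA) (bm_inj ha)).le u w ↔
          bm A S a haS hSA u ≤ bm A S a haS hSA w := fun u w => Iff.rfl
    have hflt : ∀ u w : Ω,
        (LinearOrder.lift' (bm A S a haS hSA) (bm_inj ha)).lt u w ↔
          bm A S a haS hSA u < bm A S a haS hSA w := fun u w =>
      lift'_lt_iff (bm A S a haS hSA) (bm_inj ha) u w
    have hbmlt : ∀ u w : Ω, bm A S a haS hSA u < bm A S a haS hSA w ↔
        (bm A S a haS hSA u ≤ bm A S a haS hSA w ∧ u ≠ w) := by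
      intro u w
      rw [lt_iff_le_and_ne]
      constructor
      · rintro ⟨h1, h2⟩; exact ⟨h1, fun e => h2 (e ▸ rfl)⟩
      · rintro ⟨h1, h2⟩; exact ⟨h1, fun e => h2 (bm_inj ha e)⟩
    rcases tri _ hmem with hd | hsub | hsup
    · -- disjoint from A
      have hpA : p ∉ A := fun h => inter_empty_elim hd h (by simp)
      have hqA : q ∉ A := fun h => inter_empty_elim hd h (by simp)
      have hpair : ({⟨p, hSA p hpA⟩, ⟨q, hSA q hqA⟩} : Set ↥S) ∈ trace P S := by
        rw [pair_preimage]
        exact htr1 _ hmem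
      have hne : (⟨p, hSA p hpA⟩ : ↥S) ≠ ⟨q, hSA q hqA⟩ :=
        fun h => hpq (congrArg Subtype.val h)
      have main : ∀ u w : Ω, u ≠ w → (hu : u ∉ A) → (hw : w ∉ A) →
          ({u, w} : Set Ω) ∈ P →
          L1.lt ⟨u, hSA u hu⟩ ⟨w, hSA w hw⟩ →
          (∀ z : ↥S, ¬(L1.lt ⟨u, hSA u hu⟩ z ∧ L1.lt z ⟨w, hSA w hw⟩)) →
          ((LinearOrder.lift' (bm A S a haS hSA) (bm_inj ha)).lt u w ∧
            ∀ z, ¬((LinearOrder.lift' (bm A S a haS hSA) (bm_inj ha)).lt u z ∧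
              (LinearOrder.lift' (bm A S a haS hSA) (bm_inj ha)).lt z w)) := by
        intro u w huw hu hw _ h1 h2
        constructor
        · rw [hflt, hbmlt]
          exact ⟨(bm_le_NN hu hw).2 (le_of_lt h1), huw⟩
        · rintro z ⟨hz1, hz2⟩
          rw [hflt, hbmlt] at hz1 hz2
          by_cases hzA : z ∈ A
          · have c1 := (bm_le_NA ha hu hzA).1 hz1.1
            have c2 := (bm_le_AN ha hzA hw).1 hz2.1
            exact h2 ⟨a, haS⟩ ⟨c1, c2⟩
          · have c1 := (bm_le_NN hu hzA).1 hz1.1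
            have c2 := (bm_le_NN hzA hw).1 hz2.1
            refine h2 ⟨z, hSA z hzA⟩ ⟨?_, ?_⟩
            · exact lt_of_le_of_ne c1 (fun e => hz1.2 (congrArg Subtype.val e))
            · exact lt_of_le_of_ne c2 (fun e => hz2.2 (congrArg Subtype.val e))
      rcases edge1 _ _ hne hpair with ⟨h1, h2⟩ | ⟨h1, h2⟩
      · exact Or.inl (main p q hpq hpA hqA hmem h1 h2)
      · exact Or.inr (main q p (Ne.symm hpq) hqA hpA (Set.pair_comm p q ▸ hmem) h1 h2)
    · -- A ⊆ {p,q} : then A = {p,q}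
      have hApq : A = ({p, q} : Set Ω) := by
        apply Set.Subset.antisymm hsub
        have hx0' := hsub hx0
        have hy0' := hsub hy0
        simp only [Set.mem_insert_iff, Set.mem_singleton_iff] at hx0' hy0'
        intro z hz
        simp only [Set.mem_insert_iff, Set.mem_singleton_iff] at hz
        rcases hx0' with h1 | h1 <;> rcases hy0' with h2 | h2
        · exact absurd (h1.trans h2.symm) hxy0
        · rcases hz with rfl | rfl <;> [exact h1 ▸ hx0; exact h2 ▸ hy0]
        · rcases hz with rfl | rfl <;> [exact h2 ▸ hy0; exact h1 ▸ hx0]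
        · exact absurd (h1.trans h2.symm) hxy0
      have hpA : p ∈ A := hApq ▸ (by simp)
      have hqA : q ∈ A := hApq ▸ (by simp)
      have hpair : ({⟨p, hpA⟩, ⟨q, hqA⟩} : Set ↥A) ∈ trace P A := by
        rw [pair_preimage]
        exact htr2 _ hmem
      have hne : (⟨p, hpA⟩ : ↥A) ≠ ⟨q, hqA⟩ := fun h => hpq (congrArg Subtype.val h)
      have main : ∀ u w : Ω, u ≠ w → (hu : u ∈ A) → (hw : w ∈ A) →
          L2.lt ⟨u, hu⟩ ⟨w, hw⟩ →
          (∀ z : ↥A, ¬(L2.lt ⟨u, hu⟩ z ∧ L2.lt z ⟨w, hw⟩)) →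
          ((LinearOrder.lift' (bm A S a haS hSA) (bm_inj ha)).lt u w ∧
            ∀ z, ¬((LinearOrder.lift' (bm A S a haS hSA) (bm_inj ha)).lt u z ∧
              (LinearOrder.lift' (bm A S a haS hSA) (bm_inj ha)).lt z w)) := by
        intro u w huw hu hw h1 h2
        constructor
        · rw [hflt, hbmlt]
          exact ⟨(bm_le_AA hu hw).2 (le_of_lt h1), huw⟩
        · rintro z ⟨hz1, hz2⟩
          rw [hflt, hbmlt] at hz1 hz2
          by_cases hzA : z ∈ A
          · have c1 := (bm_le_AA hu hzA).1 hz1.1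
            have c2 := (bm_le_AA hzA hw).1 hz2.1
            refine h2 ⟨z, hzA⟩ ⟨?_, ?_⟩
            · exact lt_of_le_of_ne c1 (fun e => hz1.2 (congrArg Subtype.val e))
            · exact lt_of_le_of_ne c2 (fun e => hz2.2 (congrArg Subtype.val e))
          · have c1 := (bm_le_AN ha hu hzA).1 hz1.1
            have c2 := (bm_le_NA ha hzA hw).1 hz2.1
            exact lt_irrefl _ (lt_trans c1 c2)
      rcases edge2 _ _ hne hpair with ⟨h1, h2⟩ | ⟨h1, h2⟩
      · exact Or.inl (main p q hpq hpA hqA h1 h2)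
      · exact Or.inr (main q p (Ne.symm hpq) hqA hpA h1 h2)
    · -- {p,q} ⊆ A
      have hpA : p ∈ A := hsup (by simp)
      have hqA : q ∈ A := hsup (by simp)
      have hpair : ({⟨p, hpA⟩, ⟨q, hqA⟩} : Set ↥A) ∈ trace P A := by
        rw [pair_preimage]
        exact htr2 _ hmem
      have hne : (⟨p, hpA⟩ : ↥A) ≠ ⟨q, hqA⟩ := fun h => hpq (congrArg Subtype.val h)
      have main : ∀ u w : Ω, u ≠ w → (hu : u ∈ A) → (hw : w ∈ A) →
          L2.lt ⟨u, hu⟩ ⟨w, hw⟩ →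
          (∀ z : ↥A, ¬(L2.lt ⟨u, hu⟩ z ∧ L2.lt z ⟨w, hw⟩)) →
          ((LinearOrder.lift' (bm A S a haS hSA) (bm_inj ha)).lt u w ∧
            ∀ z, ¬((LinearOrder.lift' (bm A S a haS hSA) (bm_inj ha)).lt u z ∧
              (LinearOrder.lift' (bm A S a haS hSA) (bm_inj ha)).lt z w)) := by
        intro u w huw hu hw h1 h2
        constructor
        · rw [hflt, hbmlt]
          exact ⟨(bm_le_AA hu hw).2 (le_of_lt h1), huw⟩
        · rintro z ⟨hz1, hz2⟩
          rw [hflt, hbmlt] at hz1 hz2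
          by_cases hzA : z ∈ A
          · have c1 := (bm_le_AA hu hzA).1 hz1.1
            have c2 := (bm_le_AA hzA hw).1 hz2.1
            refine h2 ⟨z, hzA⟩ ⟨?_, ?_⟩
            · exact lt_of_le_of_ne c1 (fun e => hz1.2 (congrArg Subtype.val e))
            · exact lt_of_le_of_ne c2 (fun e => hz2.2 (congrArg Subtype.val e))
          · have c1 := (bm_le_AN ha hu hzA).1 hz1.1
            have c2 := (bm_le_NA ha hzA hw).1 hz2.1
            exact lt_irrefl _ (lt_trans c1 c2)
      rcases edge2 _ _ hne hpair with ⟨h1, h2⟩ | ⟨h1, h2⟩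
      · exact Or.inl (main p q hpq hpA hqA h1 h2)
      · exact Or.inr (main q p (Ne.symm hpq) hqA hpA h1 h2)

end Patch

namespace Patch

variable {Ω : Type*} {P : Set (Set Ω)}

theorem edgeconsec_symm {L : LinearOrder Ω} {a b : Ω} (h : EdgeConsec L a b) :
    EdgeConsec L b a := h.symm

/-- The dual of a linear order, on the same type. -/
noncomputable def dualLO {α : Type*} (L : LinearOrder α) : LinearOrder α :=
  letI := L
  LinearOrder.lift' (OrderDual.toDual : α → αᵒᵈ) (fun _ _ h => h)

theorem dualLO_le {α : Type*} (L : LinearOrder α) (a b : α) :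
    (dualLO L).le a b ↔ L.le b a := Iff.rfl

theorem dualLO_lt {α : Type*} (L : LinearOrder α) (a b : α) :
    (dualLO L).lt a b ↔ L.lt b a := by
  letI := L
  rw [dualLO, lift'_lt_iff]
  exact OrderDual.toDual_lt_toDual
  exact fun _ _ h => h

theorem dualLO_conv {α : Type*} (L : LinearOrder α) {A : Set α} (h : IsConvex L.le A) :
    IsConvex (dualLO L).le A := by
  intro p q r h1 h2 hp hr
  exact h r q p ((dualLO_le L q r).1 h2) ((dualLO_le L p q).1 h1) hr hp

theorem dualLO_edge {α : Type*} (L : LinearOrder α) {a b : α} (h : EdgeConsec L a b) :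
    EdgeConsec (dualLO L) a b := by
  rcases h with ⟨h1, h2⟩ | ⟨h1, h2⟩
  · right
    refine ⟨(dualLO_lt L b a).2 h1, ?_⟩
    rintro z ⟨hz1, hz2⟩
    exact h2 z ⟨(dualLO_lt L z a).1 hz2, (dualLO_lt L b z).1 hz1⟩
  · left
    refine ⟨(dualLO_lt L a b).2 h1, ?_⟩
    rintro z ⟨hz1, hz2⟩
    exact h2 z ⟨(dualLO_lt L z b).1 hz2, (dualLO_lt L a z).1 hz1⟩

section Endpoint

open Classical in
/-- Map adding a bottom element for the deleted vertex. -/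
noncomputable def em (Sv : Set Ω) : Ω → WithBot ↥Sv := fun y =>
  if h : y ∈ Sv then ((⟨y, h⟩ : ↥Sv) : WithBot ↥Sv) else ⊥

variable {Sv : Set Ω}

theorem em_pos {y : Ω} (h : y ∈ Sv) : em Sv y = ((⟨y, h⟩ : ↥Sv) : WithBot ↥Sv) := dif_pos h

theorem em_neg {y : Ω} (h : y ∉ Sv) : em Sv y = ⊥ := dif_neg h

theorem em_inj (hout : ∀ y z : Ω, y ∉ Sv → z ∉ Sv → y = z) : Function.Injective (em Sv) := by
  intro p q hpq
  by_cases hp : p ∈ Sv <;> by_cases hq : q ∈ Sv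
  · rw [em_pos hp, em_pos hq] at hpq
    exact congrArg Subtype.val (WithBot.coe_injective hpq)
  · rw [em_pos hp, em_neg hq] at hpq
    exact absurd hpq WithBot.coe_ne_bot
  · rw [em_neg hp, em_pos hq] at hpq
    exact absurd hpq.symm WithBot.coe_ne_bot
  · exact hout p q hp hq

end Endpoint

theorem rtg_subtype {T : Set Ω} {p q : Ω}
    (hpq : Relation.ReflTransGen (stepIn P T) p q) :
    ∀ (hp : p ∈ T) (hq : q ∈ T),
      Relation.ReflTransGen (stepIn (trace P T) Set.univ) ⟨p, hp⟩ ⟨q, hq⟩ := by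
  induction hpq with
  | refl => intro hp hq; exact Relation.ReflTransGen.refl
  | tail h hs ih =>
    intro hp hq
    refine Relation.ReflTransGen.tail (ih hp hs.1) ⟨trivial, trivial, ?_, ?_⟩
    · exact fun e => hs.2.2.1 (congrArg Subtype.val e)
    · rw [pair_preimage]
      exact ⟨_, hs.2.2.2, rfl⟩

/-- In a connected graph whose edges are consecutive pairs, consecutive pairs are edges. -/
theorem consec_edge {α : Type*} {Q : Set (Set α)} (L : LinearOrder α)
    (hconn : ∀ p q : α, Relation.ReflTransGen (stepIn Q Set.univ) p q)
    (hcov : ∀ s t : α, s ≠ t → ({s, t} : Set α) ∈ Q → EdgeConsec L s t)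
    {p q : α} (h1 : L.lt p q) (h2 : ∀ z, ¬(L.lt p z ∧ L.lt z q)) : Adjv Q p q := by
  letI := L
  have hpM : p ∈ {y | y ≤ p} := le_refl p
  have hqM : q ∉ {y | y ≤ p} := fun h => absurd h1 (not_lt.2 h)
  obtain ⟨e1, e2, he1, he2, _, _, hadj⟩ := exit_lemma (hconn p q) hpM hqM
  have he2p : p < e2 := not_le.1 he2
  rcases hcov e1 e2 hadj.1 hadj.2 with ⟨k1, k2⟩ | ⟨k1, k2⟩
  · have he1p : e1 = p := by
      rcases lt_or_eq_of_le (he1 : e1 ≤ p) with h | h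
      · exact absurd ⟨h, he2p⟩ (k2 p)
      · exact h
    subst he1p
    have he2q : e2 = q := by
      rcases lt_trichotomy e2 q with h | h | h
      · exact absurd ⟨he2p, h⟩ (h2 e2)
      · exact h
      · exact absurd ⟨h1, h⟩ (k2 q)
    subst he2q
    exact hadj
  · exact absurd (lt_trans k1 (lt_of_le_of_lt he1 he2p)) (lt_irrefl e2)

theorem exists_pred {α : Type*} [Finite α] (L : LinearOrder α) {x p : α} (hp : L.lt p x) :
    ∃ p₀, L.lt p₀ x ∧ ∀ z, ¬(L.lt p₀ z ∧ L.lt z x) := by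
  letI := L
  obtain ⟨p₀, hp₀, hmax⟩ : ∃ a ∈ {z | z < x}, ∀ a' ∈ {z | z < x}, id a ≤ id a' → id a = id a' := by
    obtain ⟨a, ha, hm⟩ := Set.Finite.exists_maximalFor id {z | z < x} (Set.toFinite _) ⟨p, hp⟩
    exact ⟨a, ha, fun b hb hab => le_antisymm hab (hm hb hab)⟩
  refine ⟨p₀, hp₀, ?_⟩
  rintro z ⟨hz1, hz2⟩
  exact absurd (hmax z hz2 (le_of_lt hz1)) (ne_of_lt hz1)

theorem exists_succ {α : Type*} [Finite α] (L : LinearOrder α) {x s : α} (hs : L.lt x s) :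
    ∃ s₀, L.lt x s₀ ∧ ∀ z, ¬(L.lt x z ∧ L.lt z s₀) := by
  letI := L
  obtain ⟨s₀, hs₀, hmin⟩ : ∃ a ∈ {z | x < z}, ∀ a' ∈ {z | x < z}, id a' ≤ id a → id a = id a' := by
    obtain ⟨a, ha, hm⟩ := Set.Finite.exists_minimalFor id {z | x < z} (Set.toFinite _) ⟨s, hs⟩
    exact ⟨a, ha, fun b hb hab => le_antisymm (hm hb hab) hab⟩
  refine ⟨s₀, hs₀, ?_⟩
  rintro z ⟨hz1, hz2⟩
  exact absurd (hmin z hz1 (le_of_lt hz2)).symm (ne_of_lt hz2)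

/-- If there is any edge, crispness forces the whole graph to be connected. -/
theorem conn_univ_of_edge [Finite Ω] (hP : IsPatchwork P) (hCr : Crisp P)
    {p₀ q₀ : Ω} (hpq : Adjv P p₀ q₀) : ConnIn P Set.univ := by
  have hC : comp P Set.univ p₀ = Set.univ := by
    by_contra h
    have hq₀ : q₀ ∈ comp P Set.univ p₀ :=
      Relation.ReflTransGen.single ⟨trivial, trivial, hpq⟩
    have hp₀ : p₀ ∈ comp P Set.univ p₀ := comp_refl p₀
    have hconnC : ConnIn P (comp P Set.univ p₀) := comp_conn
    have hCP : comp P Set.univ p₀ ∈ P :=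
      conn_mem hP hconnC ⟨p₀, hp₀, q₀, hq₀, hpq.1⟩
    have hnaut : ¬Autonomous P (comp P Set.univ p₀) := by
      intro haut
      rcases hCr _ haut with h' | ⟨z, hz⟩
      · exact h h'
      · rw [hz] at hp₀ hq₀
        exact hpq.1 ((Set.mem_singleton_iff.1 hp₀).trans (Set.mem_singleton_iff.1 hq₀).symm)
    obtain ⟨B, hB, hovB⟩ : ∃ B ∈ P, Overlap (comp P Set.univ p₀) B := by
      by_contra h'
      push_neg at h'
      exact hnaut ⟨hCP, ⟨p₀, hp₀⟩, h'⟩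
    have hBuniv : B ≠ Set.univ := by
      intro h'
      exact hovB.2.1 (by rw [h']; exact fun y _ => trivial)
    have hBconn : ConnIn P B := crisp_conn hP hCr B hB hBuniv
    obtain ⟨w, hw1, hw2⟩ := hovB.1
    obtain ⟨z, hz⟩ := Set.not_subset.1 hovB.2.2
    have : z ∈ comp P Set.univ p₀ := by
      have hwz := hBconn w hw2 z hz.1
      have : ∀ u u', Relation.ReflTransGen (stepIn P B) u u' →
          u ∈ comp P Set.univ p₀ → u' ∈ comp P Set.univ p₀ := by
        intro u u' huu hu
        induction huu with
        | refl => exact hu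
        | tail h' hs ih =>
          exact comp_closed ih ⟨trivial, trivial, hs.2.2⟩
      exact this w z hwz hw1
    exact hz.2 this
  intro a _ b _
  have ha : a ∈ comp P Set.univ p₀ := by rw [hC]; trivial
  have hb : b ∈ comp P Set.univ p₀ := by rw [hC]; trivial
  exact (rtg_symm ha).trans hb

end Patch

namespace Patch

variable {Ω : Type*} {P : Set (Set Ω)}

theorem edge_lift [Finite Ω] (hP : IsPatchwork P) (hCr : Crisp P)
    {v x : Ω} (hnb : ∀ w, Adjv P v w → w = x)
    {Sv : Set Ω} (hSv : ∀ y, y ∈ Sv ↔ y ≠ v)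
    (hbig : ∀ y z w : Ω, ({y, z, w} : Set Ω) ≠ Set.univ)
    {s t : ↥Sv} (hadj : Adjv (trace P Sv) s t) : Adjv P ↑s ↑t := by
  obtain ⟨hne, D, hD, hDe⟩ := hadj
  have hst : (↑s : Ω) ≠ ↑t := fun e => hne (Subtype.ext e)
  have hsD : (↑s : Ω) ∈ D := by
    have h1 : s ∈ (Subtype.val ⁻¹' D : Set ↥Sv) := by rw [← hDe]; simp
    exact h1
  have htD : (↑t : Ω) ∈ D := by
    have h1 : t ∈ (Subtype.val ⁻¹' D : Set ↥Sv) := by rw [← hDe]; simp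
    exact h1
  have hDsub : ∀ y ∈ D, y = ↑s ∨ y = ↑t ∨ y = v := by
    intro y hy
    by_cases hyv : y = v
    · exact Or.inr (Or.inr hyv)
    · have hySv : y ∈ Sv := (hSv y).2 hyv
      have h1 : (⟨y, hySv⟩ : ↥Sv) ∈ (Subtype.val ⁻¹' D : Set ↥Sv) := hy
      rw [← hDe] at h1
      rcases h1 with h1 | h1
      · exact Or.inl (congrArg Subtype.val h1)
      · exact Or.inr (Or.inl (congrArg Subtype.val h1))
  by_cases hvD : v ∈ D
  · have hDne : D ≠ Set.univ := by
      intro h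
      apply hbig (↑s) (↑t) v
      apply Set.Subset.antisymm (fun y _ => trivial)
      intro y _
      have : y ∈ D := by rw [h]; trivial
      rcases hDsub y this with h' | h' | h' <;> simp [h']
    have hconnD : ConnIn P D := crisp_conn hP hCr D hD hDne
    obtain ⟨z, hz⟩ := (hconnD (↑s) hsD (↑t) htD).cases_head.resolve_left hst
    have hz1 : Adjv P ↑s z := hz.1.2.2
    have hz2 : z ∈ D := hz.1.2.1
    rcases hDsub z hz2 with rfl | rfl | rfl
    · exact absurd rfl hz1.1
    · exact hz1
    · have hsx : (↑s : Ω) = x := hnb (↑s) hz1.symm'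
      obtain ⟨z', hz'⟩ := (hconnD (↑t) htD (↑s) hsD).cases_head.resolve_left hst.symm
      have hz1' : Adjv P ↑t z' := hz'.1.2.2
      have hz2' : z' ∈ D := hz'.1.2.1
      rcases hDsub z' hz2' with rfl | rfl | rfl
      · exact hz1'.symm'
      · exact absurd rfl hz1'.1
      · have htx : (↑t : Ω) = x := hnb (↑t) hz1'.symm'
        exact absurd (hsx.trans htx.symm) hst
  · refine ⟨hst, ?_⟩
    have hDeq : D = ({↑s, ↑t} : Set Ω) := by
      apply Set.Subset.antisymm
      · intro y hy
        rcases hDsub y hy with h' | h' | h'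
        · exact Or.inl h'
        · exact Or.inr h'
        · exact absurd (h' ▸ hy) hvD
      · rintro y (rfl | rfl)
        · exact hsD
        · exact htD
    exact hDeq ▸ hD

theorem x_min_or_max [Finite Ω] (hP : IsPatchwork P) (hN : NoThreePairwiseAdjacent P)
    (hCr : Crisp P) (hconn : ConnIn P Set.univ)
    {v x : Ω} (hvx : Adjv P v x) (hnb : ∀ w, Adjv P v w → w = x)
    {Sv : Set Ω} (hSv : ∀ y, y ∈ Sv ↔ y ≠ v)
    (hbig : ∀ y z w : Ω, ({y, z, w} : Set Ω) ≠ Set.univ)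
    (L' : LinearOrder ↥Sv)
    (edge' : ∀ s t : ↥Sv, s ≠ t → ({s, t} : Set ↥Sv) ∈ trace P Sv → EdgeConsec L' s t) :
    (∀ s : ↥Sv, L'.le ⟨x, (hSv x).2 hvx.1.symm⟩ s) ∨
      (∀ s : ↥Sv, L'.le s ⟨x, (hSv x).2 hvx.1.symm⟩) := by
  letI := L'
  by_contra h
  push_neg at h
  obtain ⟨⟨p, hp⟩, ⟨s, hs⟩⟩ := h
  have hp' : L'.lt p ⟨x, (hSv x).2 hvx.1.symm⟩ := hp
  have hs' : L'.lt ⟨x, (hSv x).2 hvx.1.symm⟩ s := hs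
  obtain ⟨p₀, hp₀1, hp₀2⟩ := exists_pred L' hp'
  obtain ⟨s₀, hs₀1, hs₀2⟩ := exists_succ L' hs'
  have hSveq : Sv = Set.univ \ {v} := by
    ext y
    simp only [Set.mem_diff, Set.mem_univ, true_and, Set.mem_singleton_iff]
    exact hSv y
  have hconnSv : ConnIn P Sv := by
    rw [hSveq]
    exact conn_remove hconn (fun w _ hw => hnb w hw)
  have htconn : ∀ a b : ↥Sv,
      Relation.ReflTransGen (stepIn (trace P Sv) Set.univ) a b := by
    intro a b
    have h1 := rtg_subtype (P := P) (hconnSv (↑a) a.2 (↑b) b.2) a.2 b.2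
    exact h1
  have e1 := consec_edge L' htconn edge' hp₀1 hp₀2
  have e2 := consec_edge L' htconn edge' hs₀1 hs₀2
  have E1 : Adjv P ↑p₀ x := edge_lift hP hCr hnb hSv hbig e1
  have E2 : Adjv P x ↑s₀ := edge_lift hP hCr hnb hSv hbig e2
  have hps : p₀ ≠ s₀ := fun e => lt_irrefl _ (lt_trans (e ▸ hp₀1) hs₀1)
  refine deg_le_two hP hN E1.symm' E2 hvx.symm' ?_ ?_ ?_
  · exact fun e => hps (Subtype.ext e)
  · exact (hSv _).1 p₀.2
  · exact (hSv _).1 s₀.2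

theorem glue_endpoint [Finite Ω] (hP : IsPatchwork P) (hCr : Crisp P)
    {v x : Ω} (hvx : Adjv P v x) (hnb : ∀ w, Adjv P v w → w = x)
    {Sv : Set Ω} (hSv : ∀ y, y ∈ Sv ↔ y ≠ v)
    (L' : LinearOrder ↥Sv)
    (conv' : ∀ B' ∈ trace P Sv, IsConvex L'.le B')
    (edge' : ∀ s t : ↥Sv, s ≠ t → ({s, t} : Set ↥Sv) ∈ trace P Sv → EdgeConsec L' s t)
    (hxmin : ∀ s : ↥Sv, L'.le ⟨x, (hSv x).2 hvx.1.symm⟩ s) :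
    ∃ L : LinearOrder Ω, (∀ B ∈ P, IsConvex L.le B) ∧
      (∀ p q : Ω, p ≠ q → ({p, q} : Set Ω) ∈ P → EdgeConsec L p q) := by
  classical
  letI := L'
  have hout : ∀ y z : Ω, y ∉ Sv → z ∉ Sv → y = z := by
    intro y z hy hz
    have hy' : y = v := by by_contra h; exact hy ((hSv y).2 h)
    have hz' : z = v := by by_contra h; exact hz ((hSv z).2 h)
    exact hy'.trans hz'.symm
  have hvSv : v ∉ Sv := fun h => (hSv v).1 h rfl
  have hxSv : x ∈ Sv := (hSv x).2 hvx.1.symm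
  have htr : ∀ B, B ∈ P → (Subtype.val ⁻¹' B : Set ↥Sv) ∈ trace P Sv := fun B hB => ⟨B, hB, rfl⟩
  -- membership of x in members containing v
  have hvmem : ∀ B, B ∈ P → B ≠ Set.univ → v ∈ B → (∃ w ∈ B, w ≠ v) → x ∈ B := by
    intro B hB hBu hvB ⟨w, hwB, hwv⟩
    have hconnB : ConnIn P B := crisp_conn hP hCr B hB hBu
    obtain ⟨z, hz⟩ := (hconnB v hvB w hwB).cases_head.resolve_left (fun e => hwv e.symm)
    have := hnb z hz.1.2.2
    exact this ▸ hz.1.2.1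
  refine ⟨LinearOrder.lift' (em Sv) (em_inj hout), ?_, ?_⟩
  · intro B hB p q r hpq hqr hp hr
    replace hpq : em Sv p ≤ em Sv q := hpq
    replace hqr : em Sv q ≤ em Sv r := hqr
    by_cases hq : q ∈ Sv
    · have hr' : r ∈ Sv := by
        by_contra h
        rw [em_pos hq, em_neg h] at hqr
        exact WithBot.not_coe_le_bot _ hqr
      by_cases hp' : p ∈ Sv
      · rw [em_pos hp', em_pos hq] at hpq
        rw [em_pos hq, em_pos hr'] at hqr
        exact conv' _ (htr B hB) ⟨p, hp'⟩ ⟨q, hq⟩ ⟨r, hr'⟩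
          (WithBot.coe_le_coe.1 hpq) (WithBot.coe_le_coe.1 hqr) hp hr
      · -- p = v ∈ B
        have hpv : p = v := by by_contra h; exact hp' ((hSv p).2 h)
        by_cases hBu : B = Set.univ
        · rw [hBu]; trivial
        · have hxB : x ∈ B := by
            refine hvmem B hB hBu (hpv ▸ hp) ⟨r, hr, ?_⟩
            exact (hSv r).1 hr'
          rw [em_pos hq, em_pos hr'] at hqr
          exact conv' _ (htr B hB) ⟨x, hxSv⟩ ⟨q, hq⟩ ⟨r, hr'⟩
            (hxmin ⟨q, hq⟩) (WithBot.coe_le_coe.1 hqr) hxB hr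
    · -- q = v
      have hqv : q = v := by by_contra h; exact hq ((hSv q).2 h)
      have hp' : p ∉ Sv := by
        intro h
        rw [em_pos h, em_neg hq] at hpq
        exact WithBot.not_coe_le_bot _ hpq
      exact (hout p q hp' hq) ▸ hp
  · intro p q hpq hmem
    have hflt : ∀ u w : Ω,
        (LinearOrder.lift' (em Sv) (em_inj hout)).lt u w ↔ em Sv u < em Sv w :=
      fun u w => lift'_lt_iff _ _ u w
    by_cases hpv : p ∈ Sv
    · by_cases hqv : q ∈ Sv
      · -- both in Sv
        have hpair : ({⟨p, hpv⟩, ⟨q, hqv⟩} : Set ↥Sv) ∈ trace P Sv := by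
          rw [pair_preimage]; exact htr _ hmem
        have hne : (⟨p, hpv⟩ : ↥Sv) ≠ ⟨q, hqv⟩ := fun e => hpq (congrArg Subtype.val e)
        have main : ∀ u w : Ω, (hu : u ∈ Sv) → (hw : w ∈ Sv) →
            L'.lt ⟨u, hu⟩ ⟨w, hw⟩ →
            (∀ z : ↥Sv, ¬(L'.lt ⟨u, hu⟩ z ∧ L'.lt z ⟨w, hw⟩)) →
            ((LinearOrder.lift' (em Sv) (em_inj hout)).lt u w ∧
              ∀ z, ¬((LinearOrder.lift' (em Sv) (em_inj hout)).lt u z ∧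
                (LinearOrder.lift' (em Sv) (em_inj hout)).lt z w)) := by
          intro u w hu hw h1 h2
          constructor
          · rw [hflt, em_pos hu, em_pos hw]
            exact WithBot.coe_lt_coe.2 h1
          · rintro z ⟨hz1, hz2⟩
            rw [hflt] at hz1 hz2
            by_cases hzv : z ∈ Sv
            · rw [em_pos hu, em_pos hzv] at hz1
              rw [em_pos hzv, em_pos hw] at hz2
              exact h2 ⟨z, hzv⟩ ⟨WithBot.coe_lt_coe.1 hz1, WithBot.coe_lt_coe.1 hz2⟩
            · rw [em_pos hu, em_neg hzv] at hz1
              exact absurd hz1 (by simp)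
        rcases edge' _ _ hne hpair with ⟨h1, h2⟩ | ⟨h1, h2⟩
        · exact Or.inl (main p q hpv hqv h1 h2)
        · exact Or.inr (main q p hqv hpv h1 h2)
      · -- q = v : p is a neighbour of v hence p = x
        have hqv' : q = v := by by_contra h; exact hqv ((hSv q).2 h)
        subst hqv'
        have hpx : p = x := hnb p ⟨fun e => hpq e.symm, by rwa [Set.pair_comm]⟩
        subst hpx
        right
        constructor
        · rw [hflt, em_neg hqv, em_pos hpv]
          exact WithBot.bot_lt_coe _
        · rintro z ⟨hz1, hz2⟩
          rw [hflt] at hz1 hz2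
          by_cases hzv : z ∈ Sv
          · rw [em_pos hzv, em_pos hpv] at hz2
            have := WithBot.coe_lt_coe.1 hz2
            exact absurd (hxmin ⟨z, hzv⟩) (not_le.2 this)
          · rw [em_neg hqv, em_neg hzv] at hz1
            exact lt_irrefl _ hz1
    · -- p = v : q = x
      have hpv' : p = v := by by_contra h; exact hpv ((hSv p).2 h)
      subst hpv'
      have hqx : q = x := hnb q ⟨hpq, hmem⟩
      subst hqx
      left
      constructor
      · rw [hflt, em_neg hpv, em_pos hxSv]
        exact WithBot.bot_lt_coe _
      · rintro z ⟨hz1, hz2⟩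
        rw [hflt] at hz1 hz2
        by_cases hzv : z ∈ Sv
        · rw [em_pos hzv, em_pos hxSv] at hz2
          have := WithBot.coe_lt_coe.1 hz2
          exact absurd (hxmin ⟨z, hzv⟩) (not_le.2 this)
        · rw [em_neg hpv, em_neg hzv] at hz1
          exact lt_irrefl _ hz1

end Patch

namespace Patch

theorem three_le_card {α : Type*} [Fintype α] {a b c : α} (hab : a ≠ b) (hac : a ≠ c)
    (hbc : b ≠ c) : 3 ≤ Fintype.card α := by
  classical
  have h1 : ({a, b, c} : Finset α).card = 3 := by
    rw [Finset.card_insert_of_notMem (by simp [hab, hac]),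
      Finset.card_insert_of_notMem (by simp [hbc]), Finset.card_singleton]
  have h2 := Finset.card_le_univ ({a, b, c} : Finset α)
  rw [h1] at h2
  exact le_trans h2 (le_of_eq Finset.card_univ)

theorem minmax_of_card_le_two {α : Type*} [Fintype α] (L : LinearOrder α)
    (h : Fintype.card α ≤ 2) (x : α) : (∀ s, L.le x s) ∨ (∀ s, L.le s x) := by
  letI := L
  by_contra h'
  push_neg at h'
  obtain ⟨⟨p, hp⟩, ⟨s, hs⟩⟩ := h'
  have h1 : p ≠ x := ne_of_lt hp
  have h2 : x ≠ s := ne_of_lt hs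
  have h3 : p ≠ s := ne_of_lt (lt_trans hp hs)
  have := three_le_card h3 h1 (Ne.symm h2)
  omega

theorem finite_main : ∀ (n : ℕ) (Ω : Type u) [inst : Fintype Ω] (P : Set (Set Ω)),
    IsPatchwork P → NoThreePairwiseAdjacent P → Fintype.card Ω ≤ n →
    ∃ L : LinearOrder Ω, (∀ B ∈ P, IsConvex L.le B) ∧
      (∀ p q : Ω, p ≠ q → ({p, q} : Set Ω) ∈ P → EdgeConsec L p q) := by
  intro n
  induction n using Nat.strong_induction_on with
  | _ n ih =>
  intro Ω inst P hP hN hcard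
  classical
  by_cases hsmall : Fintype.card Ω ≤ 2
  · -- small case
    letI L₀ : LinearOrder Ω := LinearOrder.lift' (Fintype.equivFin Ω) (Fintype.equivFin Ω).injective
    have h3 : ∀ a b c : Ω, a ≠ b → a ≠ c → b ≠ c → False := by
      intro a b c hab hac hbc
      have := three_le_card hab hac hbc
      omega
    refine ⟨L₀, ?_, ?_⟩
    · intro B hB p q r hpq hqr hp hr
      by_cases hqp : q = p
      · exact hqp ▸ hp
      by_cases hqr' : q = r
      · exact hqr' ▸ hr
      by_cases hpr : p = r
      · have : q = p := le_antisymm (hpr ▸ hqr) hpq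
        exact absurd this hqp
      · exact (h3 q p r hqp hqr' hpr).elim
    · intro p q hne hmem
      rcases lt_or_gt_of_ne (show p ≠ q from hne) with h | h
      · left
        refine ⟨h, ?_⟩
        rintro z ⟨hz1, hz2⟩
        exact h3 z p q (ne_of_gt hz1) (ne_of_lt hz2) hne
      · right
        refine ⟨h, ?_⟩
        rintro z ⟨hz1, hz2⟩
        exact h3 z q p (ne_of_gt hz1) (ne_of_lt hz2) (Ne.symm hne)
  · push_neg at hsmall
    by_cases hbig : ∃ A, Autonomous P A ∧ A ≠ Set.univ ∧ ∃ u ∈ A, ∃ w ∈ A, u ≠ w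
    · -- branch 1 : big autonomous block
      obtain ⟨A, ⟨hAP, hAne, hAnov⟩, hAuniv, u0, hu0, w0, hw0, huw0⟩ := hbig
      obtain ⟨a, ha⟩ := hAne
      have haS : a ∈ (Aᶜ ∪ {a} : Set Ω) := Or.inr rfl
      have hSA : ∀ x, x ∉ A → x ∈ (Aᶜ ∪ {a} : Set Ω) := fun x hx => Or.inl hx
      have hrem : ∃ y, y ∉ (Aᶜ ∪ {a} : Set Ω) := by
        by_cases h : u0 = a
        · refine ⟨w0, ?_⟩
          rintro (hw | hw)
          · exact hw hw0
          · rw [Set.mem_singleton_iff] at hw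
            exact huw0 (h.trans hw.symm)
        · refine ⟨u0, ?_⟩
          rintro (hw | hw)
          · exact hw hu0
          · rw [Set.mem_singleton_iff] at hw
            exact h hw
      obtain ⟨y1, hy1⟩ := hrem
      have hcardS : Fintype.card ↥(Aᶜ ∪ {a} : Set Ω) < Fintype.card Ω := by
        rw [← Nat.card_eq_fintype_card, ← Nat.card_eq_fintype_card,
          Nat.card_coe_set_eq, ← Set.ncard_univ]
        exact Set.ncard_lt_ncard ⟨Set.subset_univ _, fun h => hy1 (h (Set.mem_univ y1))⟩
          (Set.toFinite _)
      obtain ⟨zA, hzA⟩ : ∃ z, z ∉ A := by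
        by_contra h
        push_neg at h
        exact hAuniv (Set.eq_univ_of_forall h)
      have hcardA : Fintype.card ↥A < Fintype.card Ω := by
        rw [← Nat.card_eq_fintype_card, ← Nat.card_eq_fintype_card,
          Nat.card_coe_set_eq, ← Set.ncard_univ]
        exact Set.ncard_lt_ncard ⟨Set.subset_univ _, fun h => hzA (h (Set.mem_univ zA))⟩
          (Set.toFinite _)
      obtain ⟨L1, conv1, edge1⟩ := ih (Fintype.card ↥(Aᶜ ∪ {a} : Set Ω))
        (lt_of_lt_of_le hcardS hcard) ↥(Aᶜ ∪ {a} : Set Ω) (trace P (Aᶜ ∪ {a}))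
        (trace_patchwork hP _) (trace_noThree hP hN _) le_rfl
      obtain ⟨L2, conv2, edge2⟩ := ih (Fintype.card ↥A)
        (lt_of_lt_of_le hcardA hcard) ↥A (trace P A)
        (trace_patchwork hP _) (trace_noThree hP hN _) le_rfl
      exact glue_block hP hAP hAnov ha hu0 hw0 huw0 haS hSA L1 L2 conv1 edge1 conv2 edge2
    · -- crisp
      have hCr : Crisp P := by
        intro A hAaut
        by_contra h
        push_neg at h
        apply hbig
        refine ⟨A, hAaut, h.1, ?_⟩
        obtain ⟨u, hu⟩ := hAaut.2.1
        by_cases h2 : ∃ w ∈ A, w ≠ u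
        · obtain ⟨w, hw1, hw2⟩ := h2
          exact ⟨u, hu, w, hw1, fun e => hw2 e.symm⟩
        · push_neg at h2
          exact absurd (Set.eq_singleton_iff_unique_mem.2 ⟨hu, h2⟩) (h.2 u)
      by_cases hedge : ∃ e1 e2 : Ω, Adjv P e1 e2
      · -- connected branch
        obtain ⟨e1, e2, he⟩ := hedge
        have hconn : ConnIn P Set.univ := conn_univ_of_edge hP hCr he
        have hv : ∃ v : Ω, ¬∃ a b, a ≠ b ∧ Adjv P v a ∧ Adjv P v b := by
          by_contra h
          push_neg at h
          exact not_all_deg_two hP hN hCr hconn e1 (fun v => h v)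
        obtain ⟨v, hv2⟩ := hv
        obtain ⟨u, hu⟩ : ∃ u : Ω, u ≠ v :=
          Fintype.exists_ne_of_one_lt_card (by omega) v
        obtain ⟨x, hvx⟩ : ∃ x, Adjv P v x := by
          obtain ⟨z, hz⟩ := (hconn v trivial u trivial).cases_head.resolve_left
            (fun e => hu e.symm)
          exact ⟨z, hz.1.2.2⟩
        have hnb : ∀ w, Adjv P v w → w = x := by
          intro w hw
          by_contra h
          exact hv2 ⟨w, x, h, hw, hvx⟩
        have hSv : ∀ y, y ∈ ({y' | y' ≠ v} : Set Ω) ↔ y ≠ v := fun y => Iff.rfl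
        have hcardS : Fintype.card ↥({y' | y' ≠ v} : Set Ω) < Fintype.card Ω := by
          rw [← Nat.card_eq_fintype_card, ← Nat.card_eq_fintype_card,
            Nat.card_coe_set_eq, ← Set.ncard_univ]
          exact Set.ncard_lt_ncard
            ⟨Set.subset_univ _, fun h => (h (Set.mem_univ v) : v ≠ v) rfl⟩ (Set.toFinite _)
        obtain ⟨L', conv', edge'⟩ := ih (Fintype.card ↥({y' | y' ≠ v} : Set Ω))
          (lt_of_lt_of_le hcardS hcard) ↥({y' | y' ≠ v} : Set Ω) (trace P _)
          (trace_patchwork hP _) (trace_noThree hP hN _) le_rfl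
        have hminmax : (∀ s : ↥({y' | y' ≠ v} : Set Ω), L'.le ⟨x, (hSv x).2 hvx.1.symm⟩ s) ∨
            (∀ s : ↥({y' | y' ≠ v} : Set Ω), L'.le s ⟨x, (hSv x).2 hvx.1.symm⟩) := by
          by_cases hc4 : 4 ≤ Fintype.card Ω
          · have hbig3 : ∀ y z w : Ω, ({y, z, w} : Set Ω) ≠ Set.univ := by
              intro y z w hyzw
              have h1 : ({y, z, w} : Set Ω).ncard ≤ 3 := by
                calc ({y, z, w} : Set Ω).ncard ≤ ({z, w} : Set Ω).ncard + 1 :=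
                      Set.ncard_insert_le _ _
                  _ ≤ (({w} : Set Ω).ncard + 1) + 1 := by
                      have := Set.ncard_insert_le z ({w} : Set Ω)
                      omega
                  _ ≤ 3 := by rw [Set.ncard_singleton]
              rw [hyzw, Set.ncard_univ, Nat.card_eq_fintype_card] at h1
              omega
            exact x_min_or_max hP hN hCr hconn hvx hnb hSv hbig3 L' edge'
          · exact minmax_of_card_le_two L' (by omega) _
        rcases hminmax with hmin | hmax
        · exact glue_endpoint hP hCr hvx hnb hSv L' conv' edge' hmin
        · refine glue_endpoint hP hCr hvx hnb hSv (dualLO L')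
            (fun B' hB' => dualLO_conv L' (conv' B' hB'))
            (fun s t h1 h2 => dualLO_edge L' (edge' s t h1 h2)) ?_
          intro s
          exact hmax s
      · -- no-edge branch
        push_neg at hedge
        letI L₀ : LinearOrder Ω :=
          LinearOrder.lift' (Fintype.equivFin Ω) (Fintype.equivFin Ω).injective
        refine ⟨L₀, ?_, ?_⟩
        · intro B hB p q r hpq hqr hp hr
          by_cases hBu : B = Set.univ
          · rw [hBu]; trivial
          · have hconnB := crisp_conn hP hCr B hB hBu
            have hss : B.Subsingleton := by
              intro y hy w hw
              by_contra h
              obtain ⟨z, hz⟩ := (hconnB y hy w hw).cases_head.resolve_left h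
              exact hedge y z hz.1.2.2
            have hpr : p = r := hss hp hr
            have : q = p := le_antisymm (hpr ▸ hqr) hpq
            exact this ▸ hp
        · intro p q hne hmem
          exact absurd ⟨hne, hmem⟩ (hedge p q)

end Patch

namespace Patch

universe u

theorem main_converse {Ω : Type u} (P : Set (Set Ω)) (hP : IsPatchwork P)
    (hN : NoThreePairwiseAdjacent P) :
    ∃ L : LinearOrder Ω, ∀ A ∈ P, IsConvex L.le A := by
  classical
  have hchoice : ∀ T : Finset Ω, ∃ L : LinearOrder ↥(↑T : Set Ω),
      ∀ B ∈ trace P (↑T : Set Ω), IsConvex L.le B := by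
    intro T
    obtain ⟨L, hconv, _⟩ := finite_main (Fintype.card ↥(↑T : Set Ω)) ↥(↑T : Set Ω)
      (trace P (↑T : Set Ω)) (trace_patchwork hP _) (trace_noThree hP hN _) le_rfl
    exact ⟨L, hconv⟩
  choose 𝕃 h𝕃 using hchoice
  haveI : (Filter.atTop : Filter (Finset Ω)).NeBot := Filter.atTop_neBot
  set U : Ultrafilter (Finset Ω) := Ultrafilter.of Filter.atTop with hUdef
  have hU : ∀ T₀ : Finset Ω, {T | T₀ ≤ T} ∈ U :=
    fun T₀ => (Ultrafilter.of_le Filter.atTop) (Filter.mem_atTop T₀)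
  set r : Ω → Ω → Prop := fun x y =>
    {T : Finset Ω | ∀ (hx : x ∈ (↑T : Set Ω)) (hy : y ∈ (↑T : Set Ω)),
      (𝕃 T).le ⟨x, hx⟩ ⟨y, hy⟩} ∈ U with hrdef
  have hmem2 : ∀ x y : Ω, ∀ T : Finset Ω, ({x, y} : Finset Ω) ≤ T →
      x ∈ (↑T : Set Ω) ∧ y ∈ (↑T : Set Ω) := by
    intro x y T h
    have h' := Finset.le_iff_subset.1 h
    exact ⟨Finset.mem_coe.2 (h' (Finset.mem_insert_self x {y})),
      Finset.mem_coe.2 (h' (Finset.mem_insert_of_mem (Finset.mem_singleton_self y)))⟩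
  have hrefl : ∀ x, r x x := by
    intro x
    rw [hrdef]
    refine Filter.mem_of_superset Filter.univ_mem ?_
    intro T _ hx hy
    exact le_refl _
  have htotal : ∀ x y, r x y ∨ r y x := by
    intro x y
    have hsub : {T : Finset Ω | ({x, y} : Finset Ω) ≤ T} ⊆
        {T : Finset Ω | ∀ (hx : x ∈ (↑T : Set Ω)) (hy : y ∈ (↑T : Set Ω)),
          (𝕃 T).le ⟨x, hx⟩ ⟨y, hy⟩} ∪
        {T : Finset Ω | ∀ (hy : y ∈ (↑T : Set Ω)) (hx : x ∈ (↑T : Set Ω)),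
          (𝕃 T).le ⟨y, hy⟩ ⟨x, hx⟩} := by
      intro T hT
      obtain ⟨hx, hy⟩ := hmem2 x y T hT
      rcases (𝕃 T).le_total ⟨x, hx⟩ ⟨y, hy⟩ with h | h
      · exact Or.inl (fun _ _ => h)
      · exact Or.inr (fun _ _ => h)
    have := Filter.mem_of_superset (hU ({x, y} : Finset Ω)) hsub
    rcases Ultrafilter.union_mem_iff.1 this with h | h
    · exact Or.inl h
    · exact Or.inr h
  have htrans : ∀ x y z, r x y → r y z → r x z := by
    intro x y z h1 h2
    rw [hrdef] at h1 h2 ⊢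
    have h3 : {T : Finset Ω | ({y} : Finset Ω) ≤ T} ∈ U := hU _
    refine Filter.mem_of_superset (Filter.inter_mem (Filter.inter_mem h1 h2) h3) ?_
    rintro T ⟨⟨hT1, hT2⟩, hT3⟩ hx hz
    have hy : y ∈ (↑T : Set Ω) :=
      Finset.mem_coe.2 (Finset.le_iff_subset.1 hT3 (Finset.mem_singleton_self y))
    exact le_trans (hT1 hx hy) (hT2 hy hz)
  have hantisymm : ∀ x y, r x y → r y x → x = y := by
    intro x y h1 h2
    rw [hrdef] at h1 h2
    have h3 : {T : Finset Ω | ({x, y} : Finset Ω) ≤ T} ∈ U := hU _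
    obtain ⟨T, ⟨⟨hT1, hT2⟩, hT3⟩⟩ :=
      Ultrafilter.nonempty_of_mem (Filter.inter_mem (Filter.inter_mem h1 h2) h3)
    obtain ⟨hx, hy⟩ := hmem2 x y T hT3
    have := le_antisymm (hT1 hx hy) (hT2 hy hx)
    exact congrArg Subtype.val this
  refine ⟨{ le := r,
            le_refl := hrefl,
            le_trans := htrans,
            le_antisymm := hantisymm,
            le_total := htotal,
            toDecidableLE := fun a b => Classical.dec _ }, ?_⟩
  intro A hA p q q' hpq hqq' hp hq'
  replace hpq : r p q := hpq
  replace hqq' : r q q' := hqq'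
  rw [hrdef] at hpq hqq'
  have h3 : {T : Finset Ω | ({p, q, q'} : Finset Ω) ≤ T} ∈ U := hU _
  obtain ⟨T, ⟨⟨hT1, hT2⟩, hT3⟩⟩ :=
    Ultrafilter.nonempty_of_mem (Filter.inter_mem (Filter.inter_mem hpq hqq') h3)
  have hsub := Finset.le_iff_subset.1 hT3
  have hpT : p ∈ (↑T : Set Ω) := Finset.mem_coe.2 (hsub (by simp))
  have hqT : q ∈ (↑T : Set Ω) := Finset.mem_coe.2 (hsub (by simp))
  have hq'T : q' ∈ (↑T : Set Ω) := Finset.mem_coe.2 (hsub (by simp))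
  have hconvT := h𝕃 T (Subtype.val ⁻¹' A) ⟨A, hA, rfl⟩
  exact hconvT ⟨p, hpT⟩ ⟨q, hqT⟩ ⟨q', hq'T⟩ (hT1 hpT hqT) (hT2 hqT hq'T) hp hq'

end Patch

theorem statement14 {Ω : Type*} (P : Set (Set Ω)) (hP : IsPatchwork P) :
    (∃ L : LinearOrder Ω, ∀ A ∈ P, IsConvex L.le A) ↔ NoThreePairwiseAdjacent P := by
  constructor
  · rintro ⟨L, hconv⟩
    exact Patch.easy_direction hconv
  · intro hN
    exact Patch.main_converse P hP hN
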